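/- arXiv:2009.01813 — 8 statements merged into one kernel-verified Lean document; each statement's English description precedes it below -/
import Mathlib

section
/- Let K be a nonarchimedean field and let A be a Banach algebra over K whose underlying ring is Noetherian. Then every radical proper ideal J of A is spectrally reduced, i.e. there exists a bounded power-multiplicative seminorm φ on A with ker(φ) = J. In particular, every prime ideal of A is spectrally reduced, so TopSpec(A) coincides with Spec(A). -/
open Filter Topology

/-- A bounded power-multiplicative (nonarchimedean, submultiplicative) ring seminorm
on a seminormed commutative ring. -/
structure IsBddPowMulSeminorm {A : Type*} [SeminormedCommRing A] (φ : A → ℝ) : Prop where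
  nonneg : ∀ f, 0 ≤ φ f
  map_zero : φ 0 = 0
  map_one : φ 1 = 1
  map_neg : ∀ f, φ (-f) = φ f
  nonarch : ∀ f g, φ (f + g) ≤ max (φ f) (φ g)
  submul : ∀ f g, φ (f * g) ≤ φ f * φ g
  pow_mul : ∀ f, ∀ n : ℕ, 1 ≤ n → φ (f ^ n) = φ f ^ n
  bounded : ∃ C > 0, ∀ f, φ f ≤ C * ‖f‖

/-- An ideal is spectrally reduced if it is the kernel of some bounded
power-multiplicative seminorm. -/
def IsSpectrallyReduced {A : Type*} [SeminormedCommRing A] (I : Ideal A) : Prop :=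
  ∃ φ : A → ℝ, IsBddPowMulSeminorm φ ∧ ∀ f, f ∈ I ↔ φ f = 0

namespace SpectralRedAux

open Metric Set

variable {A : Type*}
    [NormedCommRing A] [NormOneClass A] [CompleteSpace A]

/-- Key open-mapping consequence: given elements `a : Fin k → A`, there is `C > 0` such that
every element of the span of the `a i` (as an ideal) can be written `∑ x i * a i` with
`‖x i‖ ≤ C * ‖y‖`. -/
theorem exists_bounded_coeffs (K : Type*) [NontriviallyNormedField K] [NormedAlgebra K A] (N : Submodule A A) (hN : IsClosed (N : Set A))
    {k : ℕ} (a : Fin k → A) (haN : ∀ i, a i ∈ N)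
    (hspan : ∀ y ∈ N, ∃ c : Fin k → A, (∑ i, c i * a i) = y) :
    ∃ C > 0, ∀ y ∈ N, ∃ x : Fin k → A, (∑ i, x i * a i) = y ∧ ∀ i, ‖x i‖ ≤ C * ‖y‖ := by
  classical
  haveI : CompleteSpace (N.restrictScalars K) := hN.completeSpace_coe
  let T₀ : (Fin k → A) →ₗ[K] A :=
    { toFun := fun x => ∑ i, x i * a i
      map_add' := by intro x y; simp [add_mul, Finset.sum_add_distrib]
      map_smul' := by intro c x; simp [smul_mul_assoc, Finset.smul_sum] }
  have hbound : ∀ x : Fin k → A, ‖T₀ x‖ ≤ (∑ i, ‖a i‖) * ‖x‖ := by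
    intro x
    calc ‖∑ i, x i * a i‖ ≤ ∑ i, ‖x i * a i‖ := norm_sum_le _ _
      _ ≤ ∑ i, ‖a i‖ * ‖x‖ := by
          refine Finset.sum_le_sum fun i _ => ?_
          calc ‖x i * a i‖ ≤ ‖x i‖ * ‖a i‖ := norm_mul_le _ _
            _ ≤ ‖x‖ * ‖a i‖ := by
                have := norm_le_pi_norm x i
                exact mul_le_mul_of_nonneg_right this (norm_nonneg _)
            _ = ‖a i‖ * ‖x‖ := mul_comm _ _
      _ = (∑ i, ‖a i‖) * ‖x‖ := by rw [Finset.sum_mul]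
  let T : (Fin k → A) →L[K] A := T₀.mkContinuous _ hbound
  have hmem : ∀ x, T x ∈ N.restrictScalars K := by
    intro x
    have : (∑ i, x i * a i) ∈ N := Submodule.sum_mem _ fun i _ => N.smul_mem (x i) (haN i)
    exact this
  let T' : (Fin k → A) →L[K] (N.restrictScalars K) :=
    ContinuousLinearMap.codRestrict T _ hmem
  have hsurj : Function.Surjective T' := by
    rintro ⟨y, hy⟩
    obtain ⟨c, hc⟩ := hspan y hy
    exact ⟨c, Subtype.ext hc⟩
  obtain ⟨C, hC0, hC⟩ := T'.exists_preimage_norm_le hsurj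
  refine ⟨C, hC0, fun y hy => ?_⟩
  obtain ⟨x, hx, hxn⟩ := hC ⟨y, hy⟩
  refine ⟨x, ?_, fun i => ?_⟩
  · exact congrArg Subtype.val hx
  · exact (norm_le_pi_norm x i).trans hxn

attribute [local instance] Matrix.linftyOpNormedRing Matrix.linftyOpNormedAlgebra
  Matrix.linftyOpNormedAddCommGroup

example (k : ℕ) : CompleteSpace (PiLp 1 fun _ : Fin k => A) :=
  inferInstance

example (k : ℕ) : CompleteSpace (Matrix (Fin k) (Fin k) A) := by
  haveI : CompleteSpace (PiLp 1 fun _ : Fin k => A) := inferInstance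
  exact inferInstance

theorem ideal_isClosed (K : Type*) [NontriviallyNormedField K] [NormedAlgebra K A]
    [IsNoetherianRing A] (I : Ideal A) : IsClosed (I : Set A) := by
  classical
  set Ic : Ideal A := I.topologicalClosure with hIcdef
  have hIcc : IsClosed (Ic : Set A) := by
    rw [hIcdef, Submodule.topologicalClosure_coe]; exact isClosed_closure
  obtain ⟨k, a, ha⟩ := Submodule.fg_iff_exists_fin_generating_family.mp
    (IsNoetherian.noetherian Ic)
  have haN : ∀ i, a i ∈ Ic := fun i => ha ▸ Submodule.subset_span (Set.mem_range_self i)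
  have hspan : ∀ y ∈ Ic, ∃ c : Fin k → A, (∑ i, c i * a i) = y := by
    intro y hy
    rw [← ha] at hy
    obtain ⟨c, hc⟩ := (Submodule.mem_span_range_iff_exists_fun A).mp hy
    exact ⟨c, by simpa [smul_eq_mul] using hc⟩
  obtain ⟨C, hC0, hC⟩ := exists_bounded_coeffs K (Ic : Submodule A A) hIcc a haN hspan
  suffices hsub : (Ic : Set A) ⊆ I by
    refine isClosed_of_closure_subset ?_
    rwa [← Submodule.topologicalClosure_coe]
  set ε : ℝ := 1 / (((k : ℝ) + 1) * (C + 1)) with hεdef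
  have hε : 0 < ε := by positivity
  have hlt : (k : ℝ) * (C * ε) < 1 := by
    have he : (k : ℝ) * (C * ε) = ((k : ℝ) * C) / (((k : ℝ) + 1) * (C + 1)) := by
      rw [hεdef]; ring
    rw [he, div_lt_one (by positivity)]
    nlinarith [hC0, Nat.cast_nonneg (α := ℝ) k]
  have happ : ∀ i, ∃ b ∈ I, dist (a i) b < ε := by
    intro i
    have hai : a i ∈ closure (I : Set A) := by
      rw [← Submodule.topologicalClosure_coe]; exact haN i
    exact Metric.mem_closure_iff.mp hai ε hε
  choose b hbI hba using happ
  have hci : ∀ i, a i - b i ∈ Ic := fun i =>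
    Ic.sub_mem (haN i) (I.le_topologicalClosure (hbI i))
  choose x hx hxn using fun i => hC _ (hci i)
  haveI : CompleteSpace (PiLp 1 fun _ : Fin k => A) := inferInstance
  haveI : CompleteSpace (Matrix (Fin k) (Fin k) A) :=
    inferInstance
  haveI := @instHasSummableGeomSeriesOfCompleteSpace _ _ this
  set X : Matrix (Fin k) (Fin k) A := fun i j => x i j with hXdef
  have hxij : ∀ i j, ‖X i j‖ ≤ C * ε := by
    intro i j
    refine (hxn i j).trans ?_
    have : ‖a i - b i‖ ≤ ε := by
      rw [← dist_eq_norm]; exact (hba i).le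
    exact mul_le_mul_of_nonneg_left this hC0.le
  have hXn : ‖X‖ < 1 := by
    have h1 : ‖X‖₊ < 1 := by
      rw [Matrix.linfty_opNNNorm_def]
      refine Finset.sup_lt_iff (by norm_num) |>.mpr fun i _ => ?_
      have hr : ((∑ j, ‖X i j‖₊ : NNReal) : ℝ) < 1 := by
        push_cast
        calc (∑ j, ‖X i j‖) ≤ ∑ _j : Fin k, C * ε := Finset.sum_le_sum fun j _ => hxij i j
          _ = (k : ℝ) * (C * ε) := by simp [Finset.sum_const, mul_comm]
          _ < 1 := hlt
      exact_mod_cast hr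
    simpa [← coe_nnnorm] using (NNReal.coe_lt_coe.mpr h1)
  set U : (Matrix (Fin k) (Fin k) A)ˣ := Units.oneSub X hXn with hUdef
  have hvec : Matrix.mulVec (1 - X) a = b := by
    funext i
    have : (Matrix.mulVec (1 - X) a) i = a i - ∑ j, X i j * a j := by
      rw [Matrix.sub_mulVec]
      simp [Matrix.one_mulVec, Matrix.mulVec, dotProduct]
    rw [this, hx i]
    ring
  have hainv : a = Matrix.mulVec (↑U⁻¹ : Matrix (Fin k) (Fin k) A) b := by
    have h2 : Matrix.mulVec (↑U⁻¹ : Matrix (Fin k) (Fin k) A) (Matrix.mulVec (1 - X) a) = a := by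
      rw [Matrix.mulVec_mulVec]
      have : (↑U⁻¹ : Matrix (Fin k) (Fin k) A) * (1 - X) = 1 := by
        have := U.inv_mul
        simpa [hUdef] using this
      rw [this, Matrix.one_mulVec]
    rw [← h2, hvec]
  have haI : ∀ i, a i ∈ I := by
    intro i
    have : a i = ∑ j, (↑U⁻¹ : Matrix (Fin k) (Fin k) A) i j * b j := by
      conv_lhs => rw [hainv]
      simp [Matrix.mulVec, dotProduct]
    rw [this]
    exact Submodule.sum_mem _ fun j _ => I.mul_mem_left _ (hbI j)
  intro y hy
  have : Ic ≤ I := by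
    rw [← ha, Submodule.span_le]
    rintro _ ⟨i, rfl⟩
    exact haI i
  exact this hy

theorem mult_infDist_bound (K : Type*) [NontriviallyNormedField K] [NormedAlgebra K A]
    (hcl : ∀ I : Ideal A, IsClosed (I : Set A)) (p : Ideal A) (hp : p.IsPrime)
    {f : A} (hf : f ∉ p) :
    ∃ C > 0, ∀ g : A, infDist g (p : Set A) ≤ C * infDist (g * f) (p : Set A) := by
  classical
  set q : Ideal A := p ⊔ Ideal.span {f} with hqdef
  haveI : CompleteSpace (p.restrictScalars K) :=
    IsClosed.completeSpace_coe (s := (p : Set A)) (hs := hcl p)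
  haveI : CompleteSpace (q.restrictScalars K) :=
    IsClosed.completeSpace_coe (s := (q : Set A)) (hs := hcl q)
  let S₀ : (A × (p.restrictScalars K)) →ₗ[K] A :=
    { toFun := fun z => z.1 * f + (z.2 : A)
      map_add' := by
        intro z w
        show (z.1 + w.1) * f + ((z.2 : A) + (w.2 : A)) = (z.1 * f + (z.2 : A)) + (w.1 * f + (w.2 : A))
        ring
      map_smul' := by intro c z; simp [smul_mul_assoc, smul_add] }
  have hbound : ∀ z : A × (p.restrictScalars K), ‖S₀ z‖ ≤ (‖f‖ + 1) * ‖z‖ := by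
    intro z
    calc ‖z.1 * f + (z.2 : A)‖ ≤ ‖z.1 * f‖ + ‖(z.2 : A)‖ := norm_add_le _ _
      _ ≤ ‖z.1‖ * ‖f‖ + ‖(z.2 : A)‖ := by gcongr; exact norm_mul_le _ _
      _ ≤ ‖z‖ * ‖f‖ + ‖z‖ := by
          gcongr
          · exact norm_fst_le z
          · exact norm_snd_le z
      _ = (‖f‖ + 1) * ‖z‖ := by ring
  let S : (A × (p.restrictScalars K)) →L[K] A := S₀.mkContinuous _ hbound
  have hmem : ∀ z, S z ∈ q.restrictScalars K := by
    intro z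
    have h1 : z.1 * f ∈ q :=
      le_sup_right (α := Ideal A) (Ideal.mem_span_singleton'.mpr ⟨z.1, rfl⟩)
    have h2 : (z.2 : A) ∈ q := le_sup_left (α := Ideal A) z.2.2
    exact q.add_mem h1 h2
  let S' : (A × (p.restrictScalars K)) →L[K] (q.restrictScalars K) :=
    ContinuousLinearMap.codRestrict S _ hmem
  have hsurj : Function.Surjective S' := by
    rintro ⟨y, hy⟩
    obtain ⟨u, hu, v, hv, huv⟩ := Submodule.mem_sup.mp hy
    obtain ⟨g, hg⟩ := Ideal.mem_span_singleton'.mp hv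
    exact ⟨(g, ⟨u, hu⟩), Subtype.ext (by simp [S', S, S₀, hg]; rw [add_comm]; exact huv)⟩
  obtain ⟨C, hC0, hC⟩ := S'.exists_preimage_norm_le hsurj
  refine ⟨C, hC0, fun g => ?_⟩
  have key : ∀ z ∈ p, infDist g (p : Set A) ≤ C * dist (g * f) z := by
    intro z hz
    have hyq : g * f - z ∈ q := by
      have h1 : g * f ∈ q := le_sup_right (α := Ideal A) (Ideal.mem_span_singleton'.mpr ⟨g, rfl⟩)
      have h2 : z ∈ q := le_sup_left (α := Ideal A) hz
      exact q.sub_mem h1 h2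
    obtain ⟨x, hxe, hxn⟩ := hC ⟨g * f - z, hyq⟩
    have hxe' : x.1 * f + (x.2 : A) = g * f - z := congrArg Subtype.val hxe
    have hmem2 : g - x.1 ∈ p := by
      have : (g - x.1) * f = z + (x.2 : A) := by
        have h3 : x.1 * f = g * f - z - (x.2 : A) := by
          rw [← hxe']; ring
        rw [sub_mul, h3]; ring
      have hmul : (g - x.1) * f ∈ p := by
        rw [this]; exact p.add_mem hz x.2.2
      rcases hp.mem_or_mem hmul with h | h
      · exact h
      · exact absurd h hf
    calc infDist g (p : Set A) ≤ dist g (g - x.1) := infDist_le_dist_of_mem hmem2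
      _ = ‖x.1‖ := by rw [dist_eq_norm]; ring_nf
      _ ≤ ‖x‖ := norm_fst_le x
      _ ≤ C * ‖(⟨g * f - z, hyq⟩ : q.restrictScalars K)‖ := hxn
      _ = C * dist (g * f) z := by rw [dist_eq_norm]; rfl
  by_contra hcon
  push_neg at hcon
  have hlt : infDist (g * f) (p : Set A) < infDist g (p : Set A) / C := by
    rw [lt_div_iff₀ hC0]
    rw [mul_comm]
    exact hcon
  obtain ⟨z, hz, hdz⟩ := (infDist_lt_iff ⟨0, p.zero_mem⟩).mp hlt
  have h2 : C * dist (g * f) z < infDist g (p : Set A) := by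
    have := (lt_div_iff₀ hC0).mp hdz
    linarith [this]
  exact absurd ((key z hz).trans_lt h2) (lt_irrefl _)

noncomputable def psi (J : Ideal A) (f : A) : ℝ := infDist f (J : Set A)

variable {J : Ideal A}

theorem psi_nonneg (f : A) : 0 ≤ psi J f := infDist_nonneg

theorem psi_le_norm (f : A) : psi J f ≤ ‖f‖ := by
  have := infDist_le_dist_of_mem (x := f) J.zero_mem
  simpa [psi, dist_zero_right] using this

theorem psi_eq_zero_of_mem {f : A} (hf : f ∈ J) : psi J f = 0 :=
  infDist_zero_of_mem hf

theorem mem_of_psi_eq_zero (hJc : IsClosed (J : Set A)) {f : A} (hf : psi J f = 0) : f ∈ J :=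
  (IsClosed.mem_iff_infDist_zero hJc ⟨0, J.zero_mem⟩).mpr hf

theorem psi_neg_le (f : A) : psi J (-f) ≤ psi J f := by
  by_contra h
  push_neg at h
  obtain ⟨z, hz, hd⟩ := (infDist_lt_iff ⟨0, J.zero_mem⟩).mp h
  have h2 : psi J (-f) ≤ dist (-f) (-z) := infDist_le_dist_of_mem (J.neg_mem hz)
  rw [dist_neg_neg] at h2
  exact absurd (h2.trans_lt hd) (lt_irrefl _)

theorem psi_neg (f : A) : psi J (-f) = psi J f :=
  le_antisymm (psi_neg_le f) (by simpa using psi_neg_le (J := J) (-f))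

theorem psi_mul_le (f g : A) : psi J (f * g) ≤ psi J f * psi J g := by
  have hne : (J : Set A).Nonempty := ⟨0, J.zero_mem⟩
  have hf0 := psi_nonneg (J := J) f
  have hg0 := psi_nonneg (J := J) g
  have key : ∀ ε : ℝ, 0 < ε → ε ≤ 1 → psi J (f * g) ≤ (psi J f + ε) * (psi J g + ε) := by
    intro ε hε hε1
    obtain ⟨u, hu, hud⟩ := (infDist_lt_iff hne).mp
      (show infDist f (J : Set A) < psi J f + ε by unfold psi; linarith)
    obtain ⟨v, hv, hvd⟩ := (infDist_lt_iff hne).mp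
      (show infDist g (J : Set A) < psi J g + ε by unfold psi; linarith)
    have hw : f * v + u * g - u * v ∈ J :=
      J.sub_mem (J.add_mem (Ideal.mul_mem_left J f hv) (J.mul_mem_right g hu))
        (Ideal.mul_mem_left J u hv)
    have heq : f * g - (f * v + u * g - u * v) = (f - u) * (g - v) := by ring
    calc psi J (f * g) ≤ dist (f * g) (f * v + u * g - u * v) := infDist_le_dist_of_mem hw
      _ = ‖(f - u) * (g - v)‖ := by rw [dist_eq_norm, heq]
      _ ≤ ‖f - u‖ * ‖g - v‖ := norm_mul_le _ _
      _ ≤ (psi J f + ε) * (psi J g + ε) := by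
          rw [dist_eq_norm] at hud hvd
          exact mul_le_mul hud.le hvd.le (norm_nonneg _) (by linarith)
  refine le_of_forall_pos_le_add fun δ hδ => ?_
  set ε : ℝ := min 1 (δ / (psi J f + psi J g + 2)) with hεdef
  have hd : 0 < psi J f + psi J g + 2 := by linarith
  have hε : 0 < ε := lt_min one_pos (by positivity)
  have hε1 : ε ≤ 1 := min_le_left _ _
  have hεd : ε ≤ δ / (psi J f + psi J g + 2) := min_le_right _ _
  have h2 : (psi J f + ε) * (psi J g + ε) ≤ psi J f * psi J g + δ := by
    have h3 : ε * (psi J f + psi J g + ε) ≤ δ := by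
      have h4 : ε * (psi J f + psi J g + ε) ≤ ε * (psi J f + psi J g + 2) := by nlinarith
      have h5 : ε * (psi J f + psi J g + 2) ≤ δ := by
        rw [← le_div_iff₀ hd] at *
        exact hεd
      linarith
    nlinarith
  exact (key ε hε hε1).trans h2

theorem psi_add_le_max (hA : IsNonarchimedean (fun a : A => ‖a‖)) (f g : A) :
    psi J (f + g) ≤ max (psi J f) (psi J g) := by
  have hne : (J : Set A).Nonempty := ⟨0, J.zero_mem⟩
  refine le_of_forall_pos_le_add fun ε hε => ?_
  obtain ⟨u, hu, hud⟩ := (infDist_lt_iff hne).mp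
    (show infDist f (J : Set A) < psi J f + ε by
      unfold psi; linarith [psi_nonneg (J := J) f])
  obtain ⟨v, hv, hvd⟩ := (infDist_lt_iff hne).mp
    (show infDist g (J : Set A) < psi J g + ε by
      unfold psi; linarith [psi_nonneg (J := J) g])
  have heq : f + g - (u + v) = (f - u) + (g - v) := by ring
  calc psi J (f + g) ≤ dist (f + g) (u + v) := infDist_le_dist_of_mem (J.add_mem hu hv)
    _ = ‖(f - u) + (g - v)‖ := by rw [dist_eq_norm, heq]
    _ ≤ max ‖f - u‖ ‖g - v‖ := hA _ _
    _ ≤ max (psi J f + ε) (psi J g + ε) := by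
        rw [dist_eq_norm] at hud hvd
        exact max_le_max hud.le hvd.le
    _ = max (psi J f) (psi J g) + ε := by rw [max_add_add_right]

theorem psi_one (hJc : IsClosed (J : Set A)) (hJt : J ≠ ⊤) : psi J 1 = 1 := by
  have h1 : psi J 1 ≤ 1 := by simpa using psi_le_norm (J := J) 1
  have hpos : 0 < psi J 1 := by
    rcases (psi_nonneg (J := J) 1).lt_or_eq with h | h
    · exact h
    · exact absurd (hJt (Ideal.eq_top_of_isUnit_mem J (mem_of_psi_eq_zero hJc h.symm) isUnit_one))
        (fun h => h)
  have h2 : psi J 1 ≤ psi J 1 * psi J 1 := by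
    simpa using psi_mul_le (J := J) 1 1
  nlinarith

theorem psi_pow_le (f : A) : ∀ n : ℕ, 1 ≤ n → psi J (f ^ n) ≤ (psi J f) ^ n := by
  intro n
  induction n with
  | zero => intro h; exact absurd h (by norm_num)
  | succ m ih =>
    intro _
    rcases Nat.eq_zero_or_pos m with rfl | hm
    · simp
    · calc psi J (f ^ (m + 1)) = psi J (f ^ m * f) := by rw [pow_succ]
        _ ≤ psi J (f ^ m) * psi J f := psi_mul_le _ _
        _ ≤ (psi J f) ^ m * psi J f :=
            mul_le_mul_of_nonneg_right (ih hm) (psi_nonneg _)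
        _ = (psi J f) ^ (m + 1) := by rw [pow_succ]

theorem psi_sum_le (hA : IsNonarchimedean (fun a : A => ‖a‖)) {ι : Type*} (s : Finset ι)
    (h : ι → A) {B : ℝ} (hB : 0 ≤ B) (hb : ∀ i ∈ s, psi J (h i) ≤ B) :
    psi J (∑ i ∈ s, h i) ≤ B := by
  classical
  induction s using Finset.induction_on with
  | empty => simpa [psi_eq_zero_of_mem (J.zero_mem)] using hB
  | insert _ _ hnotmem ih =>
    rename_i a s'
    rw [Finset.sum_insert hnotmem]
    refine (psi_add_le_max hA _ _).trans (max_le (hb a (Finset.mem_insert_self a s')) ?_)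
    exact ih fun i hi => hb i (Finset.mem_insert_of_mem hi)

theorem psi_natCast_le (hA : IsNonarchimedean (fun a : A => ‖a‖)) (hJc : IsClosed (J : Set A))
    (hJt : J ≠ ⊤) (n : ℕ) : psi J (n : A) ≤ 1 := by
  induction n with
  | zero => simp [psi_eq_zero_of_mem (J.zero_mem)]
  | succ m ih =>
    push_cast
    refine (psi_add_le_max hA _ _).trans (max_le ih ?_)
    rw [psi_one hJc hJt]

theorem psi_pow_bound (hJc : IsClosed (J : Set A)) (hJt : J ≠ ⊤) {f : A} {F : ℝ} {n : ℕ}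
    (hn : 1 ≤ n) (hF : 0 < F) (h : psi J (f ^ n) ≤ F ^ n) :
    ∃ c : ℝ, 1 ≤ c ∧ ∀ k : ℕ, psi J (f ^ k) ≤ c * F ^ k := by
  set D : ℝ := max F (psi J f) with hD
  have hFD : F ≤ D := le_max_left _ _
  have hfD : psi J f ≤ D := le_max_right _ _
  have hD0 : 0 < D := lt_of_lt_of_le hF hFD
  have hDF1 : 1 ≤ D / F := (one_le_div hF).mpr hFD
  set c : ℝ := max 1 ((D / F) ^ n) with hc
  have hc1 : 1 ≤ c := le_max_left _ _
  refine ⟨c, hc1, ?_⟩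
  intro k
  induction k using Nat.strong_induction_on with
  | _ k ih =>
    rcases lt_or_ge k n with hkn | hkn
    · -- k < n : psi (f^k) ≤ (psi f)^k ≤ D^k = F^k (D/F)^k ≤ F^k (D/F)^n ≤ c F^k
      rcases Nat.eq_zero_or_pos k with rfl | hk
      · simpa [psi_one hJc hJt] using
          (le_trans hc1 (le_of_eq (by ring)) : (1:ℝ) ≤ c * F ^ 0)
      have h1 : psi J (f ^ k) ≤ (psi J f) ^ k := psi_pow_le f k hk
      have h2 : (psi J f) ^ k ≤ D ^ k := pow_le_pow_left₀ (psi_nonneg f) hfD k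
      have h3 : D ^ k = F ^ k * (D / F) ^ k := by
        rw [← mul_pow]
        congr 1
        field_simp
      have h4 : (D / F) ^ k ≤ (D / F) ^ n := pow_le_pow_right₀ hDF1 hkn.le
      have h5 : (D / F) ^ n ≤ c := le_max_right _ _
      calc psi J (f ^ k) ≤ D ^ k := h1.trans h2
        _ = F ^ k * (D / F) ^ k := h3
        _ ≤ F ^ k * c := by
            refine mul_le_mul_of_nonneg_left (h4.trans h5) (by positivity)
        _ = c * F ^ k := mul_comm _ _
    · -- k ≥ n
      have hk0 : 0 < k := lt_of_lt_of_le hn hkn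
      have hkk : k - n < k := Nat.sub_lt hk0 hn
      have hsplit : f ^ k = f ^ n * f ^ (k - n) := by
        rw [← pow_add]
        congr 1
        omega
      calc psi J (f ^ k) = psi J (f ^ n * f ^ (k - n)) := by rw [hsplit]
        _ ≤ psi J (f ^ n) * psi J (f ^ (k - n)) := psi_mul_le _ _
        _ ≤ F ^ n * (c * F ^ (k - n)) := by
            refine mul_le_mul h (ih _ hkk) (psi_nonneg _) (by positivity)
        _ = c * F ^ k := by
            rw [← mul_assoc, mul_comm (F ^ n) c, mul_assoc, ← pow_add]
            congr 2
            omega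

noncomputable def phi (J : Ideal A) (f : A) : ℝ :=
  ⨅ n : ℕ, psi J (f ^ (n + 1)) ^ ((((n : ℕ) + 1 : ℕ) : ℝ))⁻¹

theorem phi_term_nonneg (f : A) (n : ℕ) :
    0 ≤ psi J (f ^ (n + 1)) ^ ((((n : ℕ) + 1 : ℕ) : ℝ))⁻¹ :=
  Real.rpow_nonneg (psi_nonneg _) _

theorem phi_bdd (f : A) :
    BddBelow (Set.range fun n : ℕ => psi J (f ^ (n + 1)) ^ ((((n : ℕ) + 1 : ℕ) : ℝ))⁻¹) :=
  ⟨0, by rintro _ ⟨n, rfl⟩; exact phi_term_nonneg f n⟩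

theorem phi_nonneg (f : A) : 0 ≤ phi J f :=
  le_ciInf fun n => phi_term_nonneg f n

theorem phi_le_term (f : A) (n : ℕ) :
    phi J f ≤ psi J (f ^ (n + 1)) ^ ((((n : ℕ) + 1 : ℕ) : ℝ))⁻¹ :=
  ciInf_le (phi_bdd f) n

theorem phi_le_psi (f : A) : phi J f ≤ psi J f := by
  have := phi_le_term (J := J) f 0
  simpa using this

theorem phi_eq_zero_of_mem {f : A} (hf : f ∈ J) : phi J f = 0 :=
  le_antisymm (by simpa [psi_eq_zero_of_mem hf] using phi_le_psi (J := J) f) (phi_nonneg f)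

theorem phi_one (hJc : IsClosed (J : Set A)) (hJt : J ≠ ⊤) : phi J 1 = 1 := by
  unfold phi
  have : (fun n : ℕ => psi J (1 ^ (n + 1)) ^ ((((n : ℕ) + 1 : ℕ) : ℝ))⁻¹) = fun _ : ℕ => 1 := by
    funext n
    rw [one_pow, psi_one hJc hJt, Real.one_rpow]
  rw [this, ciInf_const]

theorem phi_neg (f : A) : phi J (-f) = phi J f := by
  unfold phi
  congr 1
  funext n
  congr 1
  rcases Nat.even_or_odd (n + 1) with he | ho
  · rw [he.neg_pow]
  · rw [ho.neg_pow, psi_neg]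

theorem term_pow_lt {f : A} {b : ℝ} (hb : 0 < b) {n : ℕ}
    (h : psi J (f ^ (n + 1)) ^ ((((n : ℕ) + 1 : ℕ) : ℝ))⁻¹ < b) :
    psi J (f ^ (n + 1)) < b ^ (n + 1) := by
  have h0 := psi_nonneg (J := J) (f ^ (n + 1))
  have heq : (psi J (f ^ (n + 1)) ^ ((((n : ℕ) + 1 : ℕ) : ℝ))⁻¹) ^ (n + 1)
      = psi J (f ^ (n + 1)) := Real.rpow_inv_natCast_pow h0 (by omega)
  calc psi J (f ^ (n + 1))
      = (psi J (f ^ (n + 1)) ^ ((((n : ℕ) + 1 : ℕ) : ℝ))⁻¹) ^ (n + 1) := heq.symm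
    _ < b ^ (n + 1) := by
        exact pow_lt_pow_left₀ h (Real.rpow_nonneg h0 _) (by omega)

theorem le_mul_of_forall_add {a b c : ℝ} (hb : 0 ≤ b) (hc : 0 ≤ c)
    (h : ∀ ε : ℝ, 0 < ε → ε ≤ 1 → a ≤ (b + ε) * (c + ε)) : a ≤ b * c := by
  refine le_of_forall_pos_le_add fun δ hδ => ?_
  set ε := min 1 (δ / (b + c + 2)) with hεdef
  have hd : 0 < b + c + 2 := by linarith
  have hε : 0 < ε := lt_min one_pos (by positivity)
  have hε1 : ε ≤ 1 := min_le_left _ _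
  have hεd : ε ≤ δ / (b + c + 2) := min_le_right _ _
  have h5 : ε * (b + c + 2) ≤ δ := by
    rw [← le_div_iff₀ hd]
    exact hεd
  nlinarith [h ε hε hε1]

theorem phi_submul (hJc : IsClosed (J : Set A)) (hJt : J ≠ ⊤) (x y : A) :
    phi J (x * y) ≤ phi J x * phi J y := by
  refine le_mul_of_forall_add (phi_nonneg x) (phi_nonneg y) fun ε hε _ => ?_
  have hX0 : 0 < phi J x + ε := by linarith [phi_nonneg (J := J) x]
  have hY0 : 0 < phi J y + ε := by linarith [phi_nonneg (J := J) y]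
  obtain ⟨n, hn⟩ := exists_lt_of_ciInf_lt
    (show phi J x < phi J x + ε from lt_add_of_pos_right _ hε)
  obtain ⟨m, hm⟩ := exists_lt_of_ciInf_lt
    (show phi J y < phi J y + ε from lt_add_of_pos_right _ hε)
  have ha : psi J (x ^ (n + 1)) < (phi J x + ε) ^ (n + 1) := term_pow_lt hX0 hn
  have hb : psi J (y ^ (m + 1)) < (phi J y + ε) ^ (m + 1) := term_pow_lt hY0 hm
  set N : ℕ := (n + 1) * (m + 1) with hNdef
  have hN1 : 1 ≤ N := by
    rw [hNdef]
    exact Nat.one_le_iff_ne_zero.mpr (Nat.mul_ne_zero n.succ_ne_zero m.succ_ne_zero)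
  set j : ℕ := N - 1 with hjdef
  have hj : j + 1 = N := by omega
  have hstep : phi J (x * y) ≤ psi J ((x * y) ^ N) ^ (((N : ℕ) : ℝ))⁻¹ := by
    have := phi_le_term (J := J) (x * y) j
    rwa [hj] at this
  have hsplit : (x * y) ^ N = x ^ N * y ^ N := mul_pow x y N
  have hxN : psi J (x ^ N) ≤ (phi J x + ε) ^ N := by
    have h1 : x ^ N = (x ^ (n + 1)) ^ (m + 1) := by rw [← pow_mul]
    rw [h1]
    calc psi J ((x ^ (n + 1)) ^ (m + 1)) ≤ psi J (x ^ (n + 1)) ^ (m + 1) :=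
          psi_pow_le _ _ (by omega)
      _ ≤ ((phi J x + ε) ^ (n + 1)) ^ (m + 1) :=
          pow_le_pow_left₀ (psi_nonneg _) ha.le _
      _ = (phi J x + ε) ^ N := by rw [← pow_mul]
  have hyN : psi J (y ^ N) ≤ (phi J y + ε) ^ N := by
    have h1 : y ^ N = (y ^ (m + 1)) ^ (n + 1) := by rw [← pow_mul, mul_comm]
    rw [h1]
    calc psi J ((y ^ (m + 1)) ^ (n + 1)) ≤ psi J (y ^ (m + 1)) ^ (n + 1) :=
          psi_pow_le _ _ (by omega)
      _ ≤ ((phi J y + ε) ^ (m + 1)) ^ (n + 1) :=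
          pow_le_pow_left₀ (psi_nonneg _) hb.le _
      _ = (phi J y + ε) ^ N := by rw [← pow_mul, mul_comm]
  have hprod : psi J ((x * y) ^ N) ≤ ((phi J x + ε) * (phi J y + ε)) ^ N := by
    rw [hsplit, mul_pow]
    calc psi J (x ^ N * y ^ N) ≤ psi J (x ^ N) * psi J (y ^ N) := psi_mul_le _ _
      _ ≤ (phi J x + ε) ^ N * (phi J y + ε) ^ N :=
          mul_le_mul hxN hyN (psi_nonneg _) (by positivity)
  calc phi J (x * y) ≤ psi J ((x * y) ^ N) ^ (((N : ℕ) : ℝ))⁻¹ := hstep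
    _ ≤ (((phi J x + ε) * (phi J y + ε)) ^ N) ^ (((N : ℕ) : ℝ))⁻¹ :=
        Real.rpow_le_rpow (psi_nonneg _) hprod (by positivity)
    _ = (phi J x + ε) * (phi J y + ε) :=
        Real.pow_rpow_inv_natCast (by positivity) (by omega)

theorem phi_pow_le (hJc : IsClosed (J : Set A)) (hJt : J ≠ ⊤) (f : A) (k : ℕ) :
    phi J (f ^ k) ≤ (phi J f) ^ k := by
  induction k with
  | zero => simp [phi_one hJc hJt]
  | succ m ih =>
    calc phi J (f ^ (m + 1)) = phi J (f ^ m * f) := by rw [pow_succ]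
      _ ≤ phi J (f ^ m) * phi J f := phi_submul hJc hJt _ _
      _ ≤ (phi J f) ^ m * phi J f := mul_le_mul_of_nonneg_right ih (phi_nonneg _)
      _ = (phi J f) ^ (m + 1) := by rw [pow_succ]

theorem phi_pow_ge (f : A) {k : ℕ} (hk : 1 ≤ k) : (phi J f) ^ k ≤ phi J (f ^ k) := by
  refine le_ciInf fun m => ?_
  have hNpos : 0 < k * (m + 1) := by positivity
  set j : ℕ := k * (m + 1) - 1 with hjdef
  have hj : j + 1 = k * (m + 1) := by omega
  have h1 : phi J f ≤ psi J (f ^ (j + 1)) ^ ((((j : ℕ) + 1 : ℕ) : ℝ))⁻¹ := phi_le_term f j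
  have h2 : f ^ (j + 1) = (f ^ k) ^ (m + 1) := by rw [hj, pow_mul]
  rw [h2, hj] at h1
  have h3 : (phi J f) ^ k ≤ (psi J ((f ^ k) ^ (m + 1)) ^ (((k * (m + 1) : ℕ) : ℝ))⁻¹) ^ k :=
    pow_le_pow_left₀ (phi_nonneg f) h1 k
  refine h3.trans_eq ?_
  rw [← Real.rpow_natCast (psi J ((f ^ k) ^ (m + 1)) ^ (((k * (m + 1) : ℕ) : ℝ))⁻¹) k,
    ← Real.rpow_mul (psi_nonneg _)]
  congr 1
  have hk0 : (k : ℝ) ≠ 0 := by positivity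
  have hm0 : ((m : ℝ) + 1) ≠ 0 := by positivity
  push_cast
  field_simp

theorem phi_nonarch (hA : IsNonarchimedean (fun a : A => ‖a‖)) (hJc : IsClosed (J : Set A))
    (hJt : J ≠ ⊤) (f g : A) : phi J (f + g) ≤ max (phi J f) (phi J g) := by
  refine le_of_forall_pos_le_add fun ε hε => ?_
  set F : ℝ := phi J f + ε with hFdef
  set G : ℝ := phi J g + ε with hGdef
  set M : ℝ := max F G with hMdef
  have hF0 : 0 < F := by have := phi_nonneg (J := J) f; rw [hFdef]; linarith
  have hG0 : 0 < G := by have := phi_nonneg (J := J) g; rw [hGdef]; linarith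
  have hM0 : 0 < M := lt_of_lt_of_le hF0 (le_max_left _ _)
  have hMF : F ≤ M := le_max_left _ _
  have hMG : G ≤ M := le_max_right _ _
  obtain ⟨n, hn⟩ := exists_lt_of_ciInf_lt
    (show phi J f < F from lt_add_of_pos_right _ hε)
  obtain ⟨m, hm⟩ := exists_lt_of_ciInf_lt
    (show phi J g < G from lt_add_of_pos_right _ hε)
  obtain ⟨cf, hcf1, hcf⟩ := psi_pow_bound hJc hJt (n := n + 1) (by omega) hF0
    (term_pow_lt hF0 hn).le
  obtain ⟨cg, hcg1, hcg⟩ := psi_pow_bound hJc hJt (n := m + 1) (by omega) hG0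
    (term_pow_lt hG0 hm).le
  have hterm : ∀ N : ℕ, psi J ((f + g) ^ N) ≤ cf * cg * M ^ N := by
    intro N
    rw [add_pow]
    refine psi_sum_le hA _ _ (by positivity) fun k hk => ?_
    have hkN : k ≤ N := Finset.mem_range_succ_iff.mp hk
    calc psi J (f ^ k * g ^ (N - k) * ((N.choose k : ℕ) : A))
        ≤ psi J (f ^ k * g ^ (N - k)) * psi J ((N.choose k : ℕ) : A) := psi_mul_le _ _
      _ ≤ psi J (f ^ k * g ^ (N - k)) * 1 :=
          mul_le_mul_of_nonneg_left (psi_natCast_le hA hJc hJt _) (psi_nonneg _)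
      _ = psi J (f ^ k * g ^ (N - k)) := mul_one _
      _ ≤ psi J (f ^ k) * psi J (g ^ (N - k)) := psi_mul_le _ _
      _ ≤ (cf * F ^ k) * (cg * G ^ (N - k)) :=
          mul_le_mul (hcf k) (hcg (N - k)) (psi_nonneg _) (by positivity)
      _ ≤ (cf * M ^ k) * (cg * M ^ (N - k)) := by
          refine mul_le_mul ?_ ?_ (by positivity) (by positivity)
          · exact mul_le_mul_of_nonneg_left (pow_le_pow_left₀ hF0.le hMF k) (by linarith)
          · exact mul_le_mul_of_nonneg_left (pow_le_pow_left₀ hG0.le hMG _) (by linarith)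
      _ = cf * cg * M ^ N := by
          rw [show (cf * M ^ k) * (cg * M ^ (N - k)) = cf * cg * (M ^ k * M ^ (N - k)) by ring,
            ← pow_add]
          congr 2
          omega
  have hfinal : phi J (f + g) ≤ M := by
    refine le_of_forall_pos_le_add fun δ hδ => ?_
    set r : ℝ := 1 + δ / M with hrdef
    have hr1 : 1 < r := by
      rw [hrdef]
      have : 0 < δ / M := by positivity
      linarith
    obtain ⟨N, hN⟩ := pow_unbounded_of_one_lt (cf * cg) hr1
    have hN1 : cf * cg ≤ r ^ (N + 1) :=
      hN.le.trans (pow_le_pow_right₀ hr1.le (by omega))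
    have ht := hterm (N + 1)
    have h1 : phi J (f + g) ≤ (cf * cg * M ^ (N + 1)) ^ ((((N : ℕ) + 1 : ℕ) : ℝ))⁻¹ :=
      (phi_le_term (f + g) N).trans (Real.rpow_le_rpow (psi_nonneg _) ht (by positivity))
    have h2 : (cf * cg * M ^ (N + 1)) ≤ r ^ (N + 1) * M ^ (N + 1) :=
      mul_le_mul_of_nonneg_right hN1 (by positivity)
    have heq : (r ^ (N + 1) * M ^ (N + 1)) ^ ((((N : ℕ) + 1 : ℕ) : ℝ))⁻¹ = r * M := by
      rw [← mul_pow]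
      exact Real.pow_rpow_inv_natCast (by positivity) (by omega)
    have h3 : phi J (f + g) ≤ r * M := by
      refine h1.trans ?_
      refine (Real.rpow_le_rpow (by positivity) h2 (by positivity)).trans_eq heq
    have h4 : r * M = M + δ := by
      rw [hrdef]
      field_simp
    linarith [h3, h4.symm.le]
  refine hfinal.trans_eq ?_
  rw [hMdef, hFdef, hGdef, max_add_add_right]

theorem mem_of_phi_eq_zero (K : Type*) [NontriviallyNormedField K] [NormedAlgebra K A]
    [IsNoetherianRing A] (hJt : J ≠ ⊤) (hrad : J.IsRadical) {f : A}
    (hphi : phi J f = 0) : f ∈ J := by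
  have hcl : ∀ I : Ideal A, IsClosed (I : Set A) := fun I => ideal_isClosed K I
  have hmem : f ∈ J.radical := by
    rw [Ideal.radical_eq_sInf]
    refine Submodule.mem_sInf.mpr ?_
    rintro p ⟨hJp, hp⟩
    by_contra hf
    obtain ⟨C, hC0, hC⟩ := mult_infDist_bound K hcl p hp hf
    have hd1 : 0 < infDist f (p : Set A) :=
      ((hcl p).notMem_iff_infDist_pos ⟨0, p.zero_mem⟩).mp hf
    set d : ℝ := infDist f (p : Set A) with hddef
    have chain : ∀ n : ℕ, d ≤ C ^ n * infDist (f ^ (n + 1)) (p : Set A) := by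
      intro n
      induction n with
      | zero => simp [hddef]
      | succ m ih =>
        have h3 : f ^ (m + 1) * f = f ^ (m + 2) := by rw [← pow_succ]
        calc d ≤ C ^ m * infDist (f ^ (m + 1)) (p : Set A) := ih
          _ ≤ C ^ m * (C * infDist (f ^ (m + 2)) (p : Set A)) := by
              refine mul_le_mul_of_nonneg_left ?_ (by positivity)
              have h2 := hC (f ^ (m + 1))
              rwa [h3] at h2
          _ = C ^ (m + 1) * infDist (f ^ (m + 2)) (p : Set A) := by ring
    have hle : ∀ n : ℕ, infDist (f ^ n) (p : Set A) ≤ psi J (f ^ n) := fun n =>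
      infDist_le_infDist_of_subset (fun x hx => hJp hx) ⟨0, J.zero_mem⟩
    set r : ℝ := min (1 / 2 : ℝ) (C * d / 2) with hrdef
    have hr0 : 0 < r := lt_min (by norm_num) (by positivity)
    have hr1 : r ≤ 1 := (min_le_left _ _).trans (by norm_num)
    have hrc : (0 : ℝ) < r / C := by positivity
    obtain ⟨n, hn⟩ := exists_lt_of_ciInf_lt
      (show phi J f < r / C by rw [hphi]; exact hrc)
    have hpsi : psi J (f ^ (n + 1)) < (r / C) ^ (n + 1) := term_pow_lt hrc hn
    have h5 : d ≤ C ^ n * psi J (f ^ (n + 1)) :=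
      (chain n).trans (mul_le_mul_of_nonneg_left (hle (n + 1)) (by positivity))
    have h6 : d < C ^ n * (r / C) ^ (n + 1) :=
      h5.trans_lt (mul_lt_mul_of_pos_left hpsi (by positivity))
    have heq : C ^ n * (r / C) ^ (n + 1) = r ^ (n + 1) / C := by
      rw [div_pow]
      field_simp
      ring
    have h7 : d < r ^ (n + 1) / C := heq ▸ h6
    have h8 : r ^ (n + 1) ≤ r := pow_le_of_le_one hr0.le hr1 (by omega)
    have h9 : d < r / C := h7.trans_le ((div_le_div_iff_of_pos_right hC0).mpr h8)
    have h10 : r / C ≤ d / 2 := by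
      have : r ≤ C * d / 2 := min_le_right _ _
      rw [div_le_iff₀ hC0] at *
      linarith
    linarith
  exact hrad hmem


end SpectralRedAux

/-- Every radical proper ideal of a Noetherian Banach algebra over a nonarchimedean field is
spectrally reduced; in particular every prime ideal is spectrally reduced, so
`TopSpec A = Spec A`. -/
theorem radical_ideals_spectrally_reduced_of_noetherian_banach
    {K A : Type*} [NontriviallyNormedField K] [CompleteSpace K]
    (hK : IsNonarchimedean (fun x : K => ‖x‖))
    [NormedCommRing A] [NormOneClass A] [NormedAlgebra K A] [CompleteSpace A]
    (hA : IsNonarchimedean (fun a : A => ‖a‖))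
    [IsNoetherianRing A] :
    (∀ J : Ideal A, J ≠ ⊤ → J.IsRadical → IsSpectrallyReduced J) ∧
      (∀ p : Ideal A, p.IsPrime → IsSpectrallyReduced p) := by
  have main : ∀ J : Ideal A, J ≠ ⊤ → J.IsRadical → IsSpectrallyReduced J := by
    intro J hJt hrad
    have hJc : IsClosed (J : Set A) := SpectralRedAux.ideal_isClosed K J
    refine ⟨SpectralRedAux.phi J, ⟨fun f => SpectralRedAux.phi_nonneg f,
      SpectralRedAux.phi_eq_zero_of_mem J.zero_mem,
      SpectralRedAux.phi_one hJc hJt, fun f => SpectralRedAux.phi_neg f,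
      fun f g => SpectralRedAux.phi_nonarch hA hJc hJt f g,
      fun f g => SpectralRedAux.phi_submul hJc hJt f g,
      fun f n hn => le_antisymm (SpectralRedAux.phi_pow_le hJc hJt f n)
        (SpectralRedAux.phi_pow_ge f hn),
      ⟨1, one_pos, fun f => by
        simpa using (SpectralRedAux.phi_le_psi f).trans (SpectralRedAux.psi_le_norm f)⟩⟩,
      fun f => ⟨fun hf => SpectralRedAux.phi_eq_zero_of_mem hf,
        fun hf => SpectralRedAux.mem_of_phi_eq_zero K hJt hrad hf⟩⟩
  exact ⟨main, fun p hp => main p hp.ne_top hp.isRadical⟩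
end

section
/- Let K be a nonarchimedean field and let A be a Banach algebra over K whose underlying ring is Noetherian. Then A is a Jacobson ring, i.e. every prime ideal of A is an intersection of maximal ideals. -/
open Filter Topology
open Metric

set_option linter.unusedSectionVars false
set_option maxHeartbeats 1000000

section Helpers

variable {K A : Type*} [NontriviallyNormedField K]
  [NormedCommRing A] [NormedAlgebra K A] [CompleteSpace A]

private lemma ideal_smul_mem' (I : Ideal A) (c : K) {x : A} (hx : x ∈ I) : c • x ∈ I := by
  rw [← algebraMap_smul A c x, smul_eq_mul]
  exact I.mul_mem_left _ hx

private lemma le_infDist_of {s : Set A} (hs : s.Nonempty) {x : A} {c : ℝ}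
    (h : ∀ q ∈ s, c ≤ dist x q) : c ≤ infDist x s := by
  by_contra h'
  push_neg at h'
  obtain ⟨q, hq, hd⟩ := (infDist_lt_iff hs).1 h'
  exact absurd hd (not_lt.2 (h q hq))

private lemma infDist_eq_of_sub_mem (J : Ideal A) {x y : A} (h : x - y ∈ J) :
    infDist x (J : Set A) = infDist y (J : Set A) := by
  have hne : (J : Set A).Nonempty := ⟨0, J.zero_mem⟩
  have key : ∀ (a b : A), a - b ∈ J → infDist a (J : Set A) ≤ infDist b (J : Set A) := by
    intro a b hab
    refine le_infDist_of hne fun q hq => ?_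
    have hmem : (a - b + q) ∈ J := J.add_mem hab hq
    calc infDist a (J : Set A) ≤ dist a (a - b + q) := infDist_le_dist_of_mem hmem
      _ = dist b q := by rw [dist_eq_norm, dist_eq_norm]; congr 1; ring
  refine le_antisymm (key x y h) (key y x ?_)
  simpa using J.neg_mem h

private lemma infDist_smul_ideal (J : Ideal A) (c : K) (hc : c ≠ 0) (x : A) :
    infDist (c • x) (J : Set A) = ‖c‖ * infDist x (J : Set A) := by
  have hne : (J : Set A).Nonempty := ⟨0, J.zero_mem⟩
  have key : ∀ (d : K), d ≠ 0 → ∀ (y : A),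
      infDist (d • y) (J : Set A) ≤ ‖d‖ * infDist y (J : Set A) := by
    intro d hd y
    have hdpos : 0 < ‖d‖ := norm_pos_iff.2 hd
    by_contra h'
    push_neg at h'
    have h6 : infDist y (J : Set A) < infDist (d • y) (J : Set A) / ‖d‖ := by
      rw [lt_div_iff₀ hdpos]; linarith [h']
    obtain ⟨q, hq, hdq⟩ := (infDist_lt_iff hne).1 h6
    have h7 : infDist (d • y) (J : Set A) ≤ ‖d‖ * dist y q := by
      calc infDist (d • y) (J : Set A) ≤ dist (d • y) (d • q) :=
            infDist_le_dist_of_mem (ideal_smul_mem' J d hq)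
        _ = ‖d‖ * dist y q := by
            rw [dist_eq_norm, dist_eq_norm, ← smul_sub, norm_smul]
    have h8 : ‖d‖ * dist y q < infDist (d • y) (J : Set A) := by
      have := mul_lt_mul_of_pos_left hdq hdpos
      rwa [mul_div_cancel₀ _ (ne_of_gt hdpos)] at this
    linarith
  refine le_antisymm (key c hc x) ?_
  have h1 : infDist x (J : Set A) ≤ ‖c⁻¹‖ * infDist (c • x) (J : Set A) := by
    have := key c⁻¹ (inv_ne_zero hc) (c • x)
    rwa [smul_smul, inv_mul_cancel₀ hc, one_smul] at this
  have hcpos : 0 < ‖c‖ := norm_pos_iff.2 hc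
  calc ‖c‖ * infDist x (J : Set A) ≤ ‖c‖ * (‖c⁻¹‖ * infDist (c • x) (J : Set A)) :=
        mul_le_mul_of_nonneg_left h1 hcpos.le
    _ = infDist (c • x) (J : Set A) := by
        rw [norm_inv, ← mul_assoc, mul_inv_cancel₀ (ne_of_gt hcpos), one_mul]

private lemma infDist_add_le_max (hA : IsNonarchimedean (fun a : A => ‖a‖)) (J : Ideal A)
    (x y : A) :
    infDist (x + y) (J : Set A) ≤ max (infDist x (J : Set A)) (infDist y (J : Set A)) := by
  have hne : (J : Set A).Nonempty := ⟨0, J.zero_mem⟩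
  refine le_of_forall_pos_le_add fun ε hε => ?_
  obtain ⟨q, hq, hdq⟩ := (infDist_lt_iff hne).1
    (show infDist x (J : Set A) < infDist x (J : Set A) + ε by linarith)
  obtain ⟨q', hq', hdq'⟩ := (infDist_lt_iff hne).1
    (show infDist y (J : Set A) < infDist y (J : Set A) + ε by linarith)
  have hmem : q + q' ∈ J := J.add_mem hq hq'
  have hd : dist (x + y) (q + q') ≤ max (dist x q) (dist y q') := by
    rw [dist_eq_norm, dist_eq_norm, dist_eq_norm]
    calc ‖x + y - (q + q')‖ = ‖(x - q) + (y - q')‖ := by congr 1; ring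
      _ ≤ max ‖x - q‖ ‖y - q'‖ := hA (x - q) (y - q')
  calc infDist (x + y) (J : Set A) ≤ dist (x + y) (q + q') := infDist_le_dist_of_mem hmem
    _ ≤ max (dist x q) (dist y q') := hd
    _ ≤ max (infDist x (J : Set A) + ε) (infDist y (J : Set A) + ε) :=
        max_le_max hdq.le hdq'.le
    _ = max (infDist x (J : Set A)) (infDist y (J : Set A)) + ε := max_add_add_right _ _ _

end Helpers

section ClosedIdeals

variable {A : Type*} [NormedCommRing A] [CompleteSpace A]

theorem ideal_isClosed_of_noetherian (K : Type*) [NontriviallyNormedField K]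
    [NormedAlgebra K A] [IsNoetherianRing A] (I : Ideal A) :
    IsClosed (I : Set A) := by
  classical
  refine isClosed_of_closure_subset ?_
  set N : Ideal A := I.closure with hNdef
  obtain ⟨s, hs⟩ : N.FG := IsNoetherian.noetherian N
  have hIN : ∀ {x : A}, x ∈ I → x ∈ N := by
    intro x hx
    rw [hNdef, ← SetLike.mem_coe, Ideal.coe_closure]
    exact subset_closure hx
  have hwN : ∀ i : ↥s, (i : A) ∈ N := fun i => hs ▸ Ideal.subset_span i.2
  have hclosedN : IsClosed (N : Set A) := by
    rw [hNdef, Ideal.coe_closure]; exact isClosed_closure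
  set NK : Submodule K A := Submodule.restrictScalars K N with hNK
  have hclosedNK : IsClosed (NK : Set A) := hclosedN
  haveI : CompleteSpace ↥NK := hclosedNK.completeSpace_coe
  -- the continuous linear map (b i) ↦ ∑ b i * w i
  let φℓ : (↥s → A) →ₗ[K] A :=
    { toFun := fun b => ∑ i : ↥s, b i * (i : A)
      map_add' := fun b₁ b₂ => by
        simp [add_mul, Finset.sum_add_distrib]
      map_smul' := fun c b => by
        simp [smul_mul_assoc, Finset.smul_sum] }
  have hφcont : Continuous φℓ := by
    show Continuous fun b : ↥s → A => ∑ i : ↥s, b i * (i : A)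
    exact continuous_finset_sum _ fun i _ => (continuous_apply i).mul continuous_const
  let φ : (↥s → A) →L[K] ↥NK :=
    ContinuousLinearMap.codRestrict ⟨φℓ, hφcont⟩ NK
      (fun b => N.sum_mem fun i _ => N.mul_mem_left _ (hwN i))
  have hφcoe : ∀ b : ↥s → A, (φ b : A) = ∑ i : ↥s, b i * (i : A) := fun b => rfl
  have hφsurj : Function.Surjective φ := by
    rintro ⟨y, hy⟩
    have hyN : y ∈ Ideal.span (↑s : Set A) := by rw [hs]; exact hy
    rw [Ideal.span, Submodule.mem_span_finset] at hyN
    obtain ⟨g, -, hg⟩ := hyN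
    refine ⟨fun i => g i, Subtype.ext ?_⟩
    rw [hφcoe]
    rw [show (∑ i : ↥s, g (i : A) * (i : A)) = ∑ i ∈ s, g i * i from
      Finset.sum_coe_sort s (fun i => g i * i)]
    simpa [smul_eq_mul] using hg
  obtain ⟨C, hC0, hC⟩ := φ.exists_preimage_norm_le hφsurj
  choose pre hpre hpren using hC
  set ε : ℝ := 1 / (2 * (s.card + 1) * (C + 1)) with hεdef
  have hε0 : 0 < ε := by positivity
  have hzex : ∀ i : ↥s, ∃ zz, zz ∈ I ∧ dist (i : A) zz < ε := by
    intro i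
    have hmemcl : (i : A) ∈ closure (I : Set A) := by
      have := hwN i
      rwa [hNdef, ← SetLike.mem_coe, Ideal.coe_closure] at this
    exact Metric.mem_closure_iff.1 hmemcl ε hε0
  choose z hzI hzd using hzex
  have hzN : ∀ i : ↥s, z i ∈ N := fun i => hIN (hzI i)
  have hsummem : ∀ (b : ↥s → A), (∑ i : ↥s, b i * z i) ∈ NK := fun b =>
    N.sum_mem fun i _ => N.mul_mem_left _ (hzN i)
  set step : ↥NK → ↥NK := fun yy => yy - ⟨∑ i : ↥s, pre yy i * z i, hsummem _⟩ with hstepdef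
  have hstep_coe : ∀ yy : ↥NK,
      (step yy : A) = ∑ i : ↥s, pre yy i * ((i : A) - z i) := by
    intro yy
    have hco : (∑ i : ↥s, pre yy i * (i : A)) = (yy : A) := by
      have h := congrArg (Subtype.val) (hpre yy)
      rw [← h]; rfl
    have : (step yy : A) = (yy : A) - ∑ i : ↥s, pre yy i * z i := rfl
    rw [this, ← hco, ← Finset.sum_sub_distrib]
    exact Finset.sum_congr rfl fun i _ => (mul_sub _ _ _).symm
  have hcoenorm : ∀ yy : ↥NK, ‖yy‖ = ‖(yy : A)‖ := fun yy => rfl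
  have hstep_norm : ∀ yy : ↥NK, ‖step yy‖ ≤ 2⁻¹ * ‖yy‖ := by
    intro yy
    have h1 : ‖(step yy : A)‖ ≤ ∑ i : ↥s, ‖pre yy i * ((i : A) - z i)‖ := by
      rw [hstep_coe]; exact norm_sum_le _ _
    have h2 : ∀ i : ↥s, ‖pre yy i * ((i : A) - z i)‖ ≤ (C * ‖yy‖) * ε := by
      intro i
      refine le_trans (norm_mul_le _ _) ?_
      have ha : ‖pre yy i‖ ≤ C * ‖yy‖ := le_trans (norm_le_pi_norm (pre yy) i) (hpren yy)
      have hb : ‖(i : A) - z i‖ ≤ ε := by rw [← dist_eq_norm]; exact (hzd i).le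
      exact mul_le_mul ha hb (norm_nonneg _) (by positivity)
    have h3 : ‖(step yy : A)‖ ≤ (s.card : ℝ) * ((C * ‖yy‖) * ε) := by
      refine le_trans h1 (le_trans (Finset.sum_le_sum fun i _ => h2 i) ?_)
      rw [Finset.sum_const, Finset.card_univ, Fintype.card_coe, nsmul_eq_mul]
    have harith : (s.card : ℝ) * ((C * ‖yy‖) * ε) ≤ 2⁻¹ * ‖yy‖ := by
      have hY : (0:ℝ) ≤ ‖yy‖ := norm_nonneg _
      have hcard : (0:ℝ) ≤ (s.card : ℝ) := Nat.cast_nonneg _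
      have hden : (0:ℝ) < 2 * (s.card + 1) * (C + 1) := by positivity
      rw [hεdef]
      rw [show (s.card : ℝ) * (C * ‖yy‖ * (1 / (2 * ((s.card : ℝ) + 1) * (C + 1))))
          = ((s.card : ℝ) * (C * ‖yy‖)) / (2 * ((s.card : ℝ) + 1) * (C + 1)) by ring]
      rw [div_le_iff₀ hden]
      nlinarith [mul_nonneg hY hcard, mul_nonneg hY hC0.le, hY]
    rw [hcoenorm]
    exact le_trans h3 harith
  -- iterate
  intro y hy
  have hyN : y ∈ NK := by
    show y ∈ N
    rw [hNdef, ← SetLike.mem_coe, Ideal.coe_closure]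
    exact hy
  set Y : ℕ → ↥NK := fun k => step^[k] ⟨y, hyN⟩ with hYdef
  have hYsucc : ∀ k, Y (k + 1) = step (Y k) := fun k => Function.iterate_succ_apply' _ _ _
  have hYb : ∀ k, ‖Y k‖ ≤ 2⁻¹ ^ k * ‖Y 0‖ := by
    intro k
    induction k with
    | zero => simp
    | succ k ih =>
      rw [hYsucc]
      calc ‖step (Y k)‖ ≤ 2⁻¹ * ‖Y k‖ := hstep_norm _
        _ ≤ 2⁻¹ * (2⁻¹ ^ k * ‖Y 0‖) := by
            have : (0:ℝ) ≤ 2⁻¹ := by norm_num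
            exact mul_le_mul_of_nonneg_left ih this
        _ = 2⁻¹ ^ (k + 1) * ‖Y 0‖ := by ring
  set c : ℕ → ↥s → A := fun k => pre (Y k) with hcdef
  have hsum : ∀ i : ↥s, Summable fun k => c k i := by
    intro i
    refine Summable.of_norm_bounded (g := fun k => (C * ‖Y 0‖) * 2⁻¹ ^ k)
      (Summable.mul_left _ (summable_geometric_of_lt_one (by norm_num) (by norm_num))) ?_
    intro k
    calc ‖c k i‖ ≤ C * ‖Y k‖ := le_trans (norm_le_pi_norm _ i) (hpren _)
      _ ≤ C * (2⁻¹ ^ k * ‖Y 0‖) := mul_le_mul_of_nonneg_left (hYb k) hC0.le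
      _ = (C * ‖Y 0‖) * 2⁻¹ ^ k := by ring
  set β : ↥s → A := fun i => ∑' k, c k i with hβdef
  have hPS : ∀ KK, (Y KK : A) = y - ∑ i : ↥s, (∑ k ∈ Finset.range KK, c k i) * z i := by
    intro KK
    induction KK with
    | zero => simp [hYdef]
    | succ KK ih =>
      rw [hYsucc]
      have hco : (step (Y KK) : A) = (Y KK : A) - ∑ i : ↥s, c KK i * z i := rfl
      rw [hco, ih]
      have hsplit : ∀ i : ↥s, (∑ k ∈ Finset.range (KK + 1), c k i) * z i
          = (∑ k ∈ Finset.range KK, c k i) * z i + c KK i * z i := by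
        intro i; rw [Finset.sum_range_succ, add_mul]
      rw [Finset.sum_congr rfl fun i _ => hsplit i, Finset.sum_add_distrib]
      ring
  have hY0 : Tendsto (fun KK => (Y KK : A)) atTop (𝓝 0) := by
    refine squeeze_zero_norm (a := fun k => 2⁻¹ ^ k * ‖Y 0‖) (fun k => ?_) ?_
    · exact le_trans (le_of_eq (hcoenorm (Y k)).symm) (hYb k)
    · have h := (tendsto_pow_atTop_nhds_zero_of_lt_one (by norm_num : (0:ℝ) ≤ 2⁻¹)
        (by norm_num : (2⁻¹:ℝ) < 1)).mul_const ‖Y 0‖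
      simpa using h
  have hT2 : Tendsto (fun KK => y - ∑ i : ↥s, (∑ k ∈ Finset.range KK, c k i) * z i) atTop
      (𝓝 (y - ∑ i : ↥s, β i * z i)) := by
    refine Filter.Tendsto.const_sub _ ?_
    refine tendsto_finset_sum _ fun i _ => ?_
    exact ((hsum i).hasSum.tendsto_sum_nat).mul_const _
  have heq : y = ∑ i : ↥s, β i * z i := by
    have hT2' : Tendsto (fun KK => (Y KK : A)) atTop (𝓝 (y - ∑ i : ↥s, β i * z i)) := by
      have hfun : (fun KK => y - ∑ i : ↥s, (∑ k ∈ Finset.range KK, c k i) * z i)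
          = fun KK => (Y KK : A) := funext fun KK => (hPS KK).symm
      rwa [hfun] at hT2
    have h0 : y - ∑ i : ↥s, β i * z i = 0 := tendsto_nhds_unique hT2' hY0
    exact (sub_eq_zero.mp h0)
  rw [heq]
  exact Ideal.sum_mem I fun i _ => I.mul_mem_left _ (hzI i)

end ClosedIdeals

/-- Every Noetherian Banach algebra over a nonarchimedean field is a Jacobson ring:
every prime ideal is an intersection of maximal ideals. -/
theorem noetherian_banach_algebra_is_jacobson
    {K A : Type*} [NontriviallyNormedField K] [CompleteSpace K]
    (hK : IsNonarchimedean (fun x : K => ‖x‖))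
    [NormedCommRing A] [NormOneClass A] [NormedAlgebra K A] [CompleteSpace A]
    (hA : IsNonarchimedean (fun a : A => ‖a‖))
    [IsNoetherianRing A] :
    ∀ p : Ideal A, p.IsPrime → p = sInf {m : Ideal A | p ≤ m ∧ m.IsMaximal} := by
  intro p hp
  refine le_antisymm (le_sInf fun m hm => hm.1) ?_
  by_contra hlt
  obtain ⟨f, hfJ, hfp⟩ := SetLike.not_le_iff_exists.1 hlt
  clear hlt
  -- a scalar of norm strictly between 0 and 1
  obtain ⟨tinv, htinv⟩ := NormedField.exists_one_lt_norm K
  set t : K := tinv⁻¹ with htdef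
  have htinv0 : tinv ≠ 0 := by
    intro h
    rw [h] at htinv
    rw [norm_zero] at htinv
    exact absurd htinv (by norm_num)
  have ht0 : t ≠ 0 := by
    rw [htdef]
    exact inv_ne_zero htinv0
  have htpos : 0 < ‖t‖ := norm_pos_iff.2 ht0
  have htn : ‖t‖ < 1 := by
    rw [htdef, norm_inv]
    rw [inv_lt_one_iff₀]
    right; exact htinv
  -- a maximal ideal containing p
  obtain ⟨m, hmmax, hpm⟩ := p.exists_le_maximal hp.ne_top
  have hfm : f ∈ m :=
    (sInf_le (show m ∈ {J : Ideal A | p ≤ J ∧ J.IsMaximal} from ⟨hpm, hmmax⟩)) hfJ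
  have hfJac : f ∈ p.jacobson := hfJ
  -- m is closed
  have hmcl : IsClosed (m : Set A) := by
    have hne : m.closure ≠ ⊤ := by
      intro htop
      have h1m : (1 : A) ∈ closure (m : Set A) := by
        rw [← Ideal.coe_closure, htop]
        exact Submodule.mem_top
      obtain ⟨x, hxm, hxd⟩ := Metric.mem_closure_iff.1 h1m 1 one_pos
      have hxu : IsUnit x := by
        have hnx : ‖1 - x‖ < 1 := by rw [← dist_eq_norm]; exact hxd
        have := (Units.oneSub (1 - x) hnx).isUnit
        simpa using this
      exact hmmax.ne_top (m.eq_top_of_isUnit_mem hxm hxu)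
    have heqm : m.closure = m :=
      (hmmax.eq_of_le hne fun x hx => subset_closure hx).symm
    have : (m : Set A) = closure (m : Set A) := by
      conv_lhs => rw [← heqm]
      rw [Ideal.coe_closure]
    rw [this]
    exact isClosed_closure
  -- closed ideals from Noetherianity
  have hpcl : IsClosed (p : Set A) := ideal_isClosed_of_noetherian K p
  set I₂ : Ideal A := Ideal.span {f} ⊔ p with hI₂
  have hI₂cl : IsClosed (I₂ : Set A) := ideal_isClosed_of_noetherian K I₂
  set pK : Submodule K A := Submodule.restrictScalars K p with hpK
  set I₂K : Submodule K A := Submodule.restrictScalars K I₂ with hI₂K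
  haveI : CompleteSpace ↥pK := IsClosed.completeSpace_coe (hs := show IsClosed (pK : Set A) from hpcl)
  haveI : CompleteSpace ↥I₂K :=
    IsClosed.completeSpace_coe (hs := show IsClosed (I₂K : Set A) from hI₂cl)
  -- the continuous linear map (y, q) ↦ f * y + q onto I₂
  set Ψ₀ : (A × ↥pK) →L[K] A := (ContinuousLinearMap.mul K A f).coprod pK.subtypeL with hΨ₀
  have hΨ₀app : ∀ x : A × ↥pK, Ψ₀ x = f * x.1 + (x.2 : A) := by
    intro x
    simp [hΨ₀]
  have hfI₂ : ∀ a : A, f * a ∈ I₂ := by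
    intro a
    refine (le_sup_left : Ideal.span {f} ≤ I₂) ?_
    exact Ideal.mul_mem_right _ _ (Ideal.mem_span_singleton_self f)
  have hΨmem : ∀ x : A × ↥pK, Ψ₀ x ∈ I₂K := by
    intro x
    rw [hΨ₀app]
    exact I₂.add_mem (hfI₂ x.1) ((le_sup_right : p ≤ I₂) x.2.2)
  set Ψ : (A × ↥pK) →L[K] ↥I₂K := Ψ₀.codRestrict I₂K hΨmem with hΨ
  have hΨsurj : Function.Surjective Ψ := by
    rintro ⟨zel, hz⟩
    have hz' : zel ∈ Ideal.span {f} ⊔ p := hz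
    obtain ⟨u, hu, wel, hw, huw⟩ := Submodule.mem_sup.1 hz'
    obtain ⟨a, ha⟩ := Ideal.mem_span_singleton'.1 hu
    refine ⟨(a, ⟨wel, hw⟩), Subtype.ext ?_⟩
    show Ψ₀ (a, ⟨wel, hw⟩) = zel
    rw [hΨ₀app]
    show f * a + wel = zel
    rw [mul_comm, ha, huw]
  obtain ⟨C, hC0, hC⟩ := Ψ.exists_preimage_norm_le hΨsurj
  -- the key quantitative lower bound for multiplication by f modulo p
  have hpne : (p : Set A).Nonempty := ⟨0, p.zero_mem⟩
  have hkey : ∀ yel : A, infDist yel (p : Set A) ≤ C * infDist (f * yel) (p : Set A) := by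
    intro yel
    have hstep : ∀ q ∈ (p : Set A), infDist yel (p : Set A) ≤ C * dist (f * yel) q := by
      intro q hq
      have hz2 : f * yel - q ∈ I₂ := I₂.sub_mem (hfI₂ yel) ((le_sup_right : p ≤ I₂) hq)
      obtain ⟨x, hx, hxn⟩ := hC ⟨f * yel - q, hz2⟩
      have hxval : f * x.1 + (x.2 : A) = f * yel - q := by
        have h := congrArg (Subtype.val) hx
        rw [show (Ψ x : A) = Ψ₀ x from rfl, hΨ₀app] at h
        exact h
      have hmem2 : x.1 - yel ∈ p := by
        have h5 : f * (x.1 - yel) ∈ p := by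
          have heq5 : f * (x.1 - yel) = -q - (x.2 : A) := by
            rw [mul_sub]
            rw [show f * x.1 = f * yel - q - (x.2 : A) by linear_combination hxval]
            ring
          rw [heq5]
          exact p.sub_mem (p.neg_mem hq) x.2.2
        rcases hp.mem_or_mem h5 with h | h
        · exact absurd h hfp
        · exact h
      have hnormx : ‖(⟨f * yel - q, hz2⟩ : ↥I₂K)‖ = dist (f * yel) q := by
        rw [dist_eq_norm]; rfl
      calc infDist yel (p : Set A) = infDist x.1 (p : Set A) :=
            (infDist_eq_of_sub_mem p hmem2).symm
        _ ≤ dist x.1 0 := infDist_le_dist_of_mem p.zero_mem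
        _ = ‖x.1‖ := by rw [dist_zero_right]
        _ ≤ ‖x‖ := norm_fst_le x
        _ ≤ C * ‖(⟨f * yel - q, hz2⟩ : ↥I₂K)‖ := hxn
        _ = C * dist (f * yel) q := by rw [hnormx]
    by_contra hcon
    push_neg at hcon
    have h6 : infDist (f * yel) (p : Set A) < infDist yel (p : Set A) / C := by
      rw [lt_div_iff₀ hC0]
      linarith [hcon]
    obtain ⟨q, hq, hdq⟩ := (infDist_lt_iff hpne).1 h6
    have h7 := hstep q hq
    have h8 : C * dist (f * yel) q < infDist yel (p : Set A) := by
      have := mul_lt_mul_of_pos_left hdq hC0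
      rwa [mul_div_cancel₀ _ (ne_of_gt hC0)] at this
    linarith
  -- the distance from 1 to m
  set δ : ℝ := infDist (1 : A) (m : Set A) with hδdef
  have hmne : (m : Set A).Nonempty := ⟨0, m.zero_mem⟩
  have hδpos : 0 < δ := by
    rw [hδdef]
    refine (hmcl.notMem_iff_infDist_pos hmne).1 ?_
    intro h1m
    exact hmmax.ne_top ((Ideal.eq_top_iff_one m).2 h1m)
  have hδ1 : δ ≤ 1 := by
    have h := infDist_le_dist_of_mem (x := (1 : A)) m.zero_mem
    simpa using h
  -- choose n with ‖t‖ ^ n small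
  obtain ⟨n, hn⟩ := exists_pow_lt_of_lt_one (div_pos hδpos hC0) htn
  -- resolvent element: v with (t^n - f) * v ≡ 1 mod p
  set cK : K := (t ^ n)⁻¹ with hcK
  have htn0 : t ^ n ≠ 0 := pow_ne_zero _ ht0
  have hcK0 : cK ≠ 0 := inv_ne_zero htn0
  obtain ⟨z, hz⟩ := Ideal.mem_jacobson_iff.1 hfJac (-(cK • (1 : A)))
  set v : A := cK • z with hv
  have hsmul_cancel : ∀ x : A, cK • ((t ^ n) • x) = x := by
    intro x
    rw [smul_smul, hcK, inv_mul_cancel₀ htn0, one_smul]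
  have htApow : ∀ x : A, (algebraMap K A t) ^ n * x = (t ^ n) • x := by
    intro x
    rw [← map_pow, ← Algebra.smul_def]
  have hv1 : ((algebraMap K A t) ^ n - f) * v - 1 ∈ p := by
    have hcomp : ((algebraMap K A t) ^ n - f) * v - 1 = z * -(cK • (1 : A)) * f + z - 1 := by
      rw [hv]
      rw [show ((algebraMap K A t) ^ n - f) * (cK • z)
          = cK • (((algebraMap K A t) ^ n - f) * z) from mul_smul_comm _ _ _]
      rw [sub_mul, smul_sub, htApow z, hsmul_cancel z]
      have h2 : z * -(cK • (1 : A)) * f = -(cK • (f * z)) := by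
        rw [mul_neg, neg_mul, mul_smul_comm, mul_one, smul_mul_assoc, mul_comm z f]
      rw [h2]
      ring
    rw [hcomp]
    exact hz
  have hv2 : (algebraMap K A t) ^ n * v - 1 ∈ m := by
    have hdecomp : (algebraMap K A t) ^ n * v - 1
        = (((algebraMap K A t) ^ n - f) * v - 1) + f * v := by ring
    rw [hdecomp]
    exact m.add_mem (hpm hv1) (Ideal.mul_mem_right _ _ hfm)
  have hv3 : v - cK • (1 : A) ∈ m := by
    have hrw : v - cK • (1 : A) = cK • ((algebraMap K A t) ^ n * v - 1) := by
      rw [smul_sub, htApow v, hsmul_cancel v]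
    rw [hrw]
    exact ideal_smul_mem' m cK hv2
  -- lower bound on infDist v p
  have hlb : (‖t‖ ^ n)⁻¹ * δ ≤ infDist v (p : Set A) := by
    have e1 : ‖cK‖ = (‖t‖ ^ n)⁻¹ := by rw [hcK, norm_inv, norm_pow]
    have e2 : infDist (cK • (1 : A)) (m : Set A) = ‖cK‖ * δ := by
      rw [infDist_smul_ideal m cK hcK0 (1 : A), hδdef]
    have e3 : infDist v (m : Set A) = infDist (cK • (1 : A)) (m : Set A) :=
      infDist_eq_of_sub_mem m hv3
    calc (‖t‖ ^ n)⁻¹ * δ = infDist v (m : Set A) := by rw [e3, e2, e1]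
      _ ≤ infDist v (p : Set A) :=
          infDist_le_infDist_of_subset (fun x hx => hpm hx) hpne
  have hDvpos : 0 < infDist v (p : Set A) :=
    lt_of_lt_of_le (by positivity) hlb
  -- upper bound
  have hub : infDist v (p : Set A) ≤ C * max (‖t‖ ^ n * infDist v (p : Set A)) 1 := by
    have e1 : infDist (f * v) (p : Set A)
        = infDist ((algebraMap K A t) ^ n * v - 1) (p : Set A) := by
      apply infDist_eq_of_sub_mem
      have hrw : f * v - ((algebraMap K A t) ^ n * v - 1)
          = -(((algebraMap K A t) ^ n - f) * v - 1) := by ring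
      rw [hrw]
      exact p.neg_mem hv1
    have e2 : infDist ((algebraMap K A t) ^ n * v - 1) (p : Set A)
        ≤ max (infDist ((algebraMap K A t) ^ n * v) (p : Set A)) (infDist (-1 : A) (p : Set A)) := by
      have h := infDist_add_le_max hA p ((algebraMap K A t) ^ n * v) (-1 : A)
      simpa [sub_eq_add_neg] using h
    have e3 : infDist ((algebraMap K A t) ^ n * v) (p : Set A)
        = ‖t‖ ^ n * infDist v (p : Set A) := by
      rw [htApow v, infDist_smul_ideal p (t ^ n) htn0 v, norm_pow]
    have e4 : infDist (-1 : A) (p : Set A) ≤ 1 := by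
      have h := infDist_le_dist_of_mem (x := (-1 : A)) p.zero_mem
      simpa using h
    calc infDist v (p : Set A) ≤ C * infDist (f * v) (p : Set A) := hkey v
      _ = C * infDist ((algebraMap K A t) ^ n * v - 1) (p : Set A) := by rw [e1]
      _ ≤ C * max (‖t‖ ^ n * infDist v (p : Set A)) 1 := by
          refine mul_le_mul_of_nonneg_left ?_ hC0.le
          exact le_trans e2 (max_le_max (le_of_eq e3) e4)
  -- final contradiction
  have h9 : ‖t‖ ^ n * C < δ := (lt_div_iff₀ hC0).1 hn
  rcases le_total (‖t‖ ^ n * infDist v (p : Set A)) 1 with hcase | hcase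
  · have h7 : infDist v (p : Set A) ≤ C * 1 := by
      refine le_trans hub ?_
      rw [max_eq_right hcase]
    have h8 : C < (‖t‖ ^ n)⁻¹ * δ := by
      rw [show (‖t‖ ^ n)⁻¹ * δ = δ / ‖t‖ ^ n by ring]
      rw [lt_div_iff₀ (pow_pos htpos n)]
      linarith [h9]
    linarith [hlb, h7, h8]
  · have h7 : infDist v (p : Set A) ≤ C * (‖t‖ ^ n * infDist v (p : Set A)) := by
      refine le_trans hub ?_
      rw [max_eq_left hcase]
    nlinarith [hDvpos, hδ1, h9, h7]
end

section
/- For every seminormed ring A the topological spectrum TopSpec(A) is a quasi-compact topological space. -/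
open Filter Topology

/-- The topological spectrum: the subspace of `Spec A` consisting of the spectrally
reduced prime ideals, with the topology induced from the Zariski topology. -/
abbrev TopSpec (A : Type*) [SeminormedCommRing A] : Type _ :=
  {p : PrimeSpectrum A // IsSpectrallyReduced p.asIdeal}

namespace TopSpecAux

variable {A : Type*} [SeminormedCommRing A]

/-- Any bounded power-multiplicative seminorm is bounded by the norm itself. -/
theorem le_norm [NormOneClass A] {φ : A → ℝ} (h : IsBddPowMulSeminorm φ) (f : A) :
    φ f ≤ ‖f‖ := by
  obtain ⟨C, hC, hbd⟩ := h.bounded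
  by_contra hlt
  push_neg at hlt
  have hφpos : 0 < φ f := (norm_nonneg f).trans_lt hlt
  have key : ∀ n : ℕ, 1 ≤ n → φ f ^ n ≤ C * ‖f‖ ^ n := by
    intro n hn
    calc φ f ^ n = φ (f ^ n) := (h.pow_mul f n hn).symm
      _ ≤ C * ‖f ^ n‖ := hbd _
      _ ≤ C * ‖f‖ ^ n := by
          have := norm_pow_le' f (Nat.lt_of_lt_of_le Nat.zero_lt_one hn)
          nlinarith
  rcases eq_or_lt_of_le (norm_nonneg f) with h0 | h0
  · have := key 1 le_rfl
    simp only [pow_one] at this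
    rw [← h0] at this
    nlinarith
  · set t : ℝ := φ f / ‖f‖ with ht
    have htgt : 1 < t := (one_lt_div h0).mpr hlt
    obtain ⟨n, hn⟩ := pow_unbounded_of_one_lt C htgt
    have hn' : C < t ^ (n + 1) := by
      calc C < t ^ n := hn
        _ ≤ t ^ (n + 1) := pow_le_pow_right₀ htgt.le (Nat.le_succ n)
    have := key (n + 1) (Nat.succ_le_succ (Nat.zero_le n))
    have ht' : t ^ (n + 1) ≤ C := by
      rw [ht, div_pow, div_le_iff₀ (pow_pos h0 _)]
      exact this.trans (le_of_eq rfl)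
    exact absurd ht' (not_le.mpr hn')

/-- The family of bounded power-multiplicative seminorms below `φ₀`. -/
def Fam (φ₀ : A → ℝ) : Set (A → ℝ) :=
  {ψ | IsBddPowMulSeminorm ψ ∧ ∀ f, ψ f ≤ φ₀ f}

theorem chain_inf_mem {φ₀ : A → ℝ} (h₀ : IsBddPowMulSeminorm φ₀) {c : Set (A → ℝ)}
    (hcs : c ⊆ Fam φ₀) (hchain : IsChain (· ≤ ·) c) {y : A → ℝ} (hy : y ∈ c) :
    ∃ m ∈ Fam φ₀, ∀ ψ ∈ c, m ≤ ψ := by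
  haveI : Nonempty c := ⟨⟨y, hy⟩⟩
  set m : A → ℝ := fun f => ⨅ ψ : c, (ψ : A → ℝ) f with hm
  have hbdd : ∀ f : A, BddBelow (Set.range fun ψ : c => (ψ : A → ℝ) f) := by
    intro f
    refine ⟨0, ?_⟩
    rintro _ ⟨ψ, rfl⟩
    exact (hcs ψ.2).1.nonneg f
  have hml : ∀ ψ ∈ c, ∀ f, m f ≤ ψ f := by
    intro ψ hψ f
    exact ciInf_le (hbdd f) ⟨ψ, hψ⟩
  have hnonneg : ∀ f, 0 ≤ m f := by
    intro f
    exact le_ciInf fun ψ => (hcs ψ.2).1.nonneg f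
  -- directedness: common ε-approximant
  have happrox : ∀ (f g : A), ∀ ε : ℝ, 0 < ε →
      ∃ ψ ∈ c, ψ f ≤ m f + ε ∧ ψ g ≤ m g + ε := by
    intro f g ε hε
    obtain ⟨ψ₁, hψ₁⟩ := exists_lt_of_ciInf_lt (lt_add_of_pos_right (m f) hε)
    obtain ⟨ψ₂, hψ₂⟩ := exists_lt_of_ciInf_lt (lt_add_of_pos_right (m g) hε)
    rcases eq_or_ne (ψ₁ : A → ℝ) (ψ₂ : A → ℝ) with heq | hne
    · exact ⟨ψ₁, ψ₁.2, hψ₁.le, by rw [heq]; exact hψ₂.le⟩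
    · rcases hchain ψ₁.2 ψ₂.2 hne with hle | hle
      · exact ⟨ψ₁, ψ₁.2, hψ₁.le, (hle g).trans hψ₂.le⟩
      · exact ⟨ψ₂, ψ₂.2, (hle f).trans hψ₁.le, hψ₂.le⟩
  have hnbot : (𝓝[>] (0:ℝ)).NeBot := inferInstance
  refine ⟨m, ⟨⟨hnonneg, ?_, ?_, ?_, ?_, ?_, ?_, ?_⟩, ?_⟩, hml⟩
  · -- map_zero
    have : ∀ ψ : c, (ψ : A → ℝ) 0 = 0 := fun ψ => (hcs ψ.2).1.map_zero
    simp only [hm, this, ciInf_const]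
  · -- map_one
    have : ∀ ψ : c, (ψ : A → ℝ) 1 = 1 := fun ψ => (hcs ψ.2).1.map_one
    simp only [hm, this, ciInf_const]
  · -- map_neg
    intro f
    simp only [hm]
    exact iInf_congr fun ψ => (hcs ψ.2).1.map_neg f
  · -- nonarch
    intro f g
    refine le_of_forall_pos_le_add ?_
    intro ε hε
    obtain ⟨ψ, hψc, hf, hg⟩ := happrox f g ε hε
    calc m (f + g) ≤ ψ (f + g) := hml ψ hψc _
      _ ≤ max (ψ f) (ψ g) := (hcs hψc).1.nonarch f g
      _ ≤ max (m f + ε) (m g + ε) := max_le_max hf hg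
      _ = max (m f) (m g) + ε := max_add_add_right _ _ _
  · -- submul
    intro f g
    have htend : Tendsto (fun ε : ℝ => (m f + ε) * (m g + ε)) (𝓝[>] 0) (𝓝 (m f * m g)) := by
      have : Tendsto (fun ε : ℝ => (m f + ε) * (m g + ε)) (𝓝 0) (𝓝 ((m f + 0) * (m g + 0))) := by
        exact ((tendsto_const_nhds.add tendsto_id).mul (tendsto_const_nhds.add tendsto_id))
      simpa using this.mono_left nhdsWithin_le_nhds
    refine ge_of_tendsto htend ?_
    filter_upwards [self_mem_nhdsWithin] with ε hε
    obtain ⟨ψ, hψc, hf, hg⟩ := happrox f g ε hε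
    calc m (f * g) ≤ ψ (f * g) := hml ψ hψc _
      _ ≤ ψ f * ψ g := (hcs hψc).1.submul f g
      _ ≤ (m f + ε) * (m g + ε) := by
          have h1 : 0 ≤ ψ f := (hcs hψc).1.nonneg f
          have h2 : 0 ≤ ψ g := (hcs hψc).1.nonneg g
          exact mul_le_mul hf hg h2 (add_nonneg (hnonneg f) (le_of_lt hε))
  · -- pow_mul
    intro f n hn
    refine le_antisymm ?_ ?_
    · have htend : Tendsto (fun ε : ℝ => (m f + ε) ^ n) (𝓝[>] 0) (𝓝 (m f ^ n)) := by
        have : Tendsto (fun ε : ℝ => (m f + ε) ^ n) (𝓝 0) (𝓝 ((m f + 0) ^ n)) :=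
          (tendsto_const_nhds.add tendsto_id).pow n
        simpa using this.mono_left nhdsWithin_le_nhds
      refine ge_of_tendsto htend ?_
      filter_upwards [self_mem_nhdsWithin] with ε hε
      obtain ⟨ψ, hψc, hf, -⟩ := happrox f f ε hε
      calc m (f ^ n) ≤ ψ (f ^ n) := hml ψ hψc _
        _ = ψ f ^ n := (hcs hψc).1.pow_mul f n hn
        _ ≤ (m f + ε) ^ n := by
            have h1 : 0 ≤ ψ f := (hcs hψc).1.nonneg f
            exact pow_le_pow_left₀ h1 hf n
    · refine le_ciInf fun ψ => ?_
      have : m f ^ n ≤ ψ.1 f ^ n := pow_le_pow_left₀ (hnonneg f) (hml ψ.1 ψ.2 f) n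
      rw [← (hcs ψ.2).1.pow_mul f n hn] at this
      exact this
  · -- bounded
    obtain ⟨C, hC, hCb⟩ := h₀.bounded
    refine ⟨C, hC, fun f => ?_⟩
    exact ((hml y hy f).trans ((hcs hy).2 f)).trans (hCb f)
  · -- ≤ φ₀
    intro f
    exact (hml y hy f).trans ((hcs hy).2 f)

/-- Ring seminorm from the predicate. -/
def toRingSeminorm {ψ : A → ℝ} (h : IsBddPowMulSeminorm ψ) : RingSeminorm A where
  toFun := ψ
  map_zero' := h.map_zero
  add_le' := fun f g => (h.nonarch f g).trans
    (max_le (le_add_of_nonneg_right (h.nonneg g)) (le_add_of_nonneg_left (h.nonneg f)))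
  neg' := h.map_neg
  mul_le' := h.submul

/-- Key existence result: below any bounded power-multiplicative seminorm there is a
bounded multiplicative seminorm. -/
theorem exists_mulSeminorm {φ₀ : A → ℝ} (h₀ : IsBddPowMulSeminorm φ₀) :
    ∃ ψ : A → ℝ, IsBddPowMulSeminorm ψ ∧ (∀ f g, ψ (f * g) = ψ f * ψ g) ∧ ∀ f, ψ f ≤ φ₀ f := by
  -- Zorn's lemma in the dual order to get a minimal element of `Fam φ₀`.
  obtain ⟨ψ, -, hψmem, hψmin⟩ := zorn_le_nonempty₀ (α := (A → ℝ)ᵒᵈ) (Fam φ₀)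
    (fun c hcs hchain y hy => by
      obtain ⟨m, hmF, hml⟩ := chain_inf_mem h₀ hcs
        (fun {a} ha {b} hb hne => Or.symm (hchain ha hb hne)) hy
      exact ⟨OrderDual.toDual m, hmF, fun z hz => hml z hz⟩)
    (OrderDual.toDual φ₀) ⟨h₀, fun f => le_rfl⟩
  have hψ : IsBddPowMulSeminorm (OrderDual.ofDual ψ) := hψmem.1
  set ψ' : A → ℝ := OrderDual.ofDual ψ with hψ'
  have hmin : ∀ χ ∈ Fam φ₀, (∀ f, χ f ≤ ψ' f) → χ = ψ' := by
    intro χ hχ hle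
    have h2 := hψmin (y := OrderDual.toDual χ) hχ (fun f => hle f)
    exact funext fun f => le_antisymm (hle f) (h2 f)
  -- minimal elements are multiplicative
  refine ⟨ψ', hψ, ?_, hψmem.2⟩
  intro c x
  by_cases hc : ψ' c = 0
  · have h1 : ψ' (c * x) ≤ 0 := by
      have := hψ.submul c x
      rw [hc, zero_mul] at this
      exact this
    rw [hc, zero_mul]
    exact le_antisymm h1 (hψ.nonneg _)
  · -- use seminormFromConst
    set F : RingSeminorm A := toRingSeminorm hψ with hF
    have hf1 : F 1 ≤ 1 := le_of_eq hψ.map_one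
    have hcne : F c ≠ 0 := hc
    have hpm : IsPowMul F := fun a n hn => hψ.pow_mul a n hn
    set χ : A → ℝ := seminormFromConst' c F with hχdef
    have hχle : ∀ f, χ f ≤ ψ' f := fun f => seminormFromConst_le_seminorm hf1 hcne hpm f
    have hχRS : ∀ f, χ f = (seminormFromConst hf1 hcne hpm) f := fun f => rfl
    have hχmem : χ ∈ Fam φ₀ := by
      constructor
      · refine ⟨?_, ?_, ?_, ?_, ?_, ?_, ?_, ?_⟩
        · intro f; rw [hχRS f]; exact apply_nonneg _ f
        · rw [hχRS 0]; exact map_zero _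
        · exact seminormFromConst_one hf1 hcne hpm
        · intro f; rw [hχRS f, hχRS (-f)]; exact map_neg_eq_map _ f
        · exact fun f g => seminormFromConst_isNonarchimedean hf1 hcne hpm
            (fun r s => hψ.nonarch r s) f g
        · intro f g; rw [hχRS f, hχRS g, hχRS (f*g)]; exact map_mul_le_mul _ f g
        · exact fun f n hn => seminormFromConst_isPowMul hf1 hcne hpm f hn
        · obtain ⟨C, hC, hCb⟩ := hψ.bounded
          exact ⟨C, hC, fun f => (hχle f).trans (hCb f)⟩
      · exact fun f => (hχle f).trans (hψmem.2 f)
    have hχψ : χ = ψ' := hmin χ hχmem hχle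
    have h1 : χ (c * x) = χ c * χ x := seminormFromConst_const_mul hf1 hcne hpm x
    rw [← hχψ]
    exact h1

/-- The predicate of being a bounded multiplicative seminorm. -/
structure IsMulNorm (ψ : A → ℝ) : Prop where
  map_zero : ψ 0 = 0
  map_one : ψ 1 = 1
  nonneg : ∀ f, 0 ≤ ψ f
  map_neg : ∀ f, ψ (-f) = ψ f
  nonarch : ∀ f g, ψ (f + g) ≤ max (ψ f) (ψ g)
  map_mul : ∀ f g, ψ (f * g) = ψ f * ψ g
  le_norm : ∀ f, ψ f ≤ ‖f‖

variable (A) in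
/-- The set of bounded multiplicative seminorms with the topology of
pointwise convergence. -/
def MulSems : Set (A → ℝ) := {ψ | IsMulNorm ψ}

theorem isCompact_mulSems : IsCompact (MulSems A) := by
  have hsub : MulSems A ⊆ Set.pi Set.univ fun f : A => Set.Icc (0 : ℝ) ‖f‖ := by
    intro ψ hψ f _
    exact ⟨hψ.nonneg f, hψ.le_norm f⟩
  refine IsCompact.of_isClosed_subset (isCompact_univ_pi fun f => isCompact_Icc) ?_ hsub
  have heq : MulSems A =
      {ψ : A → ℝ | ψ 0 = 0} ∩ ({ψ | ψ 1 = 1} ∩ ((⋂ f : A, {ψ | 0 ≤ ψ f}) ∩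
      ((⋂ f : A, {ψ | ψ (-f) = ψ f}) ∩ ((⋂ f : A, ⋂ g : A, {ψ | ψ (f + g) ≤ max (ψ f) (ψ g)}) ∩
      ((⋂ f : A, ⋂ g : A, {ψ | ψ (f * g) = ψ f * ψ g}) ∩ ⋂ f : A, {ψ | ψ f ≤ ‖f‖}))))) := by
    ext ψ
    simp only [MulSems, Set.mem_setOf_eq, Set.mem_inter_iff, Set.mem_iInter]
    exact ⟨fun h => ⟨h.map_zero, h.map_one, h.nonneg, h.map_neg, h.nonarch, h.map_mul, h.le_norm⟩,
      fun ⟨a, b, c, d, e, f, g⟩ => ⟨a, b, c, d, e, f, g⟩⟩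
  rw [heq]
  refine (isClosed_eq (continuous_apply 0) continuous_const).inter
    ((isClosed_eq (continuous_apply 1) continuous_const).inter
    ((isClosed_iInter fun f => isClosed_le continuous_const (continuous_apply f)).inter
    ((isClosed_iInter fun f => isClosed_eq (continuous_apply (-f)) (continuous_apply f)).inter
    ((isClosed_iInter fun f => isClosed_iInter fun g => isClosed_le (continuous_apply (f + g))
        ((continuous_apply f).max (continuous_apply g))).inter
    ((isClosed_iInter fun f => isClosed_iInter fun g => isClosed_eq (continuous_apply (f * g))
        ((continuous_apply f).mul (continuous_apply g))).inter
    (isClosed_iInter fun f => isClosed_le (continuous_apply f) continuous_const))))))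

/-- The kernel ideal of a multiplicative seminorm. -/
def kerIdeal {ψ : A → ℝ} (h : IsMulNorm ψ) : Ideal A where
  carrier := {f | ψ f = 0}
  add_mem' := by
    intro f g hf hg
    simp only [Set.mem_setOf_eq] at *
    refine le_antisymm ?_ (h.nonneg _)
    calc ψ (f + g) ≤ max (ψ f) (ψ g) := h.nonarch f g
      _ = 0 := by rw [hf, hg, max_self]
  zero_mem' := h.map_zero
  smul_mem' := by
    intro a f hf
    simp only [Set.mem_setOf_eq, smul_eq_mul] at *
    rw [h.map_mul, hf, mul_zero]

theorem kerIdeal_isPrime {ψ : A → ℝ} (h : IsMulNorm ψ) : (kerIdeal h).IsPrime := by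
  rw [Ideal.isPrime_iff]
  constructor
  · intro htop
    have h1 : (1 : A) ∈ kerIdeal h := htop ▸ Submodule.mem_top
    have : ψ 1 = 0 := h1
    rw [h.map_one] at this
    exact one_ne_zero this
  · intro f g hfg
    have : ψ f * ψ g = 0 := by rw [← h.map_mul]; exact hfg
    rcases mul_eq_zero.mp this with h' | h'
    · exact Or.inl h'
    · exact Or.inr h'

theorem kerIdeal_isSpectrallyReduced {ψ : A → ℝ} (h : IsMulNorm ψ) :
    IsSpectrallyReduced (kerIdeal h) := by
  refine ⟨ψ, ⟨h.nonneg, h.map_zero, h.map_one, h.map_neg, h.nonarch,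
    fun f g => le_of_eq (h.map_mul f g), ?_, ⟨1, one_pos, fun f => by simpa using h.le_norm f⟩⟩,
    fun f => Iff.rfl⟩
  intro f n hn
  induction n with
  | zero => simp [h.map_one]
  | succ k ih =>
    rcases Nat.eq_or_lt_of_le hn with h1 | h1
    · simp [← h1]
    · have hk : 1 ≤ k := Nat.lt_succ_iff.mp h1
      rw [pow_succ, h.map_mul, ih hk, pow_succ]

/-- The map sending a multiplicative seminorm to (the point of `TopSpec` given by)
its kernel. -/
def kerPoint (ψ : MulSems A) : TopSpec A :=
  ⟨⟨kerIdeal ψ.2, kerIdeal_isPrime ψ.2⟩, kerIdeal_isSpectrallyReduced ψ.2⟩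

theorem continuous_kerPoint : Continuous (kerPoint (A := A)) := by
  have hg : Continuous (fun ψ : MulSems A =>
      (⟨kerIdeal ψ.2, kerIdeal_isPrime ψ.2⟩ : PrimeSpectrum A)) := by
    rw [(PrimeSpectrum.isTopologicalBasis_basic_opens (R := A)).continuous_iff]
    rintro s ⟨r, rfl⟩
    have heq : (fun ψ : MulSems A => (⟨kerIdeal ψ.2, kerIdeal_isPrime ψ.2⟩ : PrimeSpectrum A))
        ⁻¹' (PrimeSpectrum.basicOpen r : Set (PrimeSpectrum A)) =
        {ψ : MulSems A | ψ.1 r ≠ 0} := by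
      ext ψ
      exact Iff.rfl
    rw [heq]
    exact isOpen_compl_singleton.preimage ((continuous_apply r).comp continuous_subtype_val)
  exact hg.subtype_mk _

theorem exists_le_ker [NormOneClass A] (x : TopSpec A) :
    ∃ ψ : MulSems A, x.1.asIdeal ≤ (kerPoint ψ).1.asIdeal := by
  obtain ⟨φ, hφ, hker⟩ := x.2
  obtain ⟨ψ, hψ, hmul, hle⟩ := exists_mulSeminorm hφ
  have hψM : IsMulNorm ψ :=
    ⟨hψ.map_zero, hψ.map_one, hψ.nonneg, hψ.map_neg, hψ.nonarch, hmul, le_norm hψ⟩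
  refine ⟨⟨ψ, hψM⟩, ?_⟩
  intro f hf
  have h0 : φ f = 0 := (hker f).mp hf
  have : ψ f ≤ 0 := h0 ▸ hle f
  exact le_antisymm this (hψ.nonneg f)

end TopSpecAux

/-- The topological spectrum of a seminormed ring is quasi-compact. -/
theorem topSpec_compactSpace {A : Type*} [SeminormedCommRing A] [NormOneClass A]
    (hA : IsNonarchimedean (fun a : A => ‖a‖)) :
    CompactSpace (TopSpec A) := by
  constructor
  rw [isCompact_iff_finite_subcover]
  intro ι U hU hcov
  haveI : CompactSpace (TopSpecAux.MulSems A) := isCompact_iff_compactSpace.mp (TopSpecAux.isCompact_mulSems (A := A))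
  have hK : IsCompact (Set.range (TopSpecAux.kerPoint (A := A))) := isCompact_range TopSpecAux.continuous_kerPoint
  obtain ⟨t, ht⟩ := hK.elim_finite_subcover U hU ((Set.subset_univ _).trans hcov)
  refine ⟨t, fun x _ => ?_⟩
  obtain ⟨ψ, hle⟩ := TopSpecAux.exists_le_ker x
  have hy : TopSpecAux.kerPoint ψ ∈ ⋃ i ∈ t, U i := ht (Set.mem_range_self ψ)
  rw [Set.mem_iUnion₂] at hy ⊢
  obtain ⟨i, hit, hyU⟩ := hy
  refine ⟨i, hit, ?_⟩
  obtain ⟨V, hV, hVeq⟩ := isOpen_induced_iff.mp (hU i)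
  have hspec : x.1 ⤳ (TopSpecAux.kerPoint ψ).1 := (PrimeSpectrum.le_iff_specializes x.1 (TopSpecAux.kerPoint ψ).1).mp hle
  have hxV : x.1 ∈ V := hspec.mem_open hV (by rw [← hVeq] at hyU; exact hyU)
  rw [← hVeq]
  exact hxV
end

section
/- For every seminormed ring A the topological spectrum TopSpec(A) is a sober topological space: every nonempty irreducible closed subset of TopSpec(A) has a unique generic point. -/
open Filter Topology

/-- Any bounded power-multiplicative seminorm is bounded by the norm itself. -/
lemma IsBddPowMulSeminorm.le_norm {A : Type*} [SeminormedCommRing A] {φ : A → ℝ}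
    (h : IsBddPowMulSeminorm φ) (f : A) : φ f ≤ ‖f‖ := by
  obtain ⟨C, hC, hCb⟩ := h.bounded
  by_cases hf : ‖f‖ = 0
  · have := hCb f
    rw [hf, mul_zero] at this
    calc φ f ≤ 0 := this
    _ ≤ ‖f‖ := norm_nonneg f
  have hfpos : 0 < ‖f‖ := lt_of_le_of_ne (norm_nonneg f) (Ne.symm hf)
  by_contra hlt
  push_neg at hlt
  set r : ℝ := φ f / ‖f‖ with hr
  have hr1 : 1 < r := (one_lt_div hfpos).mpr hlt
  obtain ⟨n, hn⟩ := pow_unbounded_of_one_lt C hr1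
  have key : φ f ^ (n + 1) ≤ C * ‖f‖ ^ (n + 1) := by
    calc φ f ^ (n + 1) = φ (f ^ (n + 1)) := (h.pow_mul f (n + 1) (Nat.le_add_left 1 n)).symm
    _ ≤ C * ‖f ^ (n + 1)‖ := hCb _
    _ ≤ C * ‖f‖ ^ (n + 1) := by
        exact mul_le_mul_of_nonneg_left (norm_pow_le' f (Nat.succ_pos n)) hC.le
  have hrn : r ^ (n + 1) ≤ C := by
    rw [hr, div_pow, div_le_iff₀ (pow_pos hfpos _)]
    exact key
  have : C < r ^ (n + 1) := lt_of_lt_of_le hn (pow_le_pow_right₀ hr1.le (Nat.le_succ n))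
  linarith

/-- The topological spectrum of a seminormed ring is sober: every nonempty irreducible
closed subset has a unique generic point. -/
theorem topSpec_sober {A : Type*} [SeminormedCommRing A] [NormOneClass A]
    (hA : IsNonarchimedean (fun a : A => ‖a‖)) :
    ∀ Z : Set (TopSpec A), IsClosed Z → IsIrreducible Z →
      ∃! p : TopSpec A, closure ({p} : Set (TopSpec A)) = Z := by
  classical
  intro Z hZc hZi
  obtain ⟨q0, hq0⟩ := hZi.nonempty
  have : Nonempty Z := ⟨⟨q0, hq0⟩⟩
  choose φ hφ hker using fun q : Z => q.1.2
  -- the sup seminorm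
  set Φ : A → ℝ := fun f => ⨆ q : Z, φ q f with hΦdef
  have hbdd : ∀ f : A, BddAbove (Set.range fun q : Z => φ q f) := fun f =>
    ⟨‖f‖, by rintro x ⟨q, rfl⟩; exact (hφ q).le_norm f⟩
  have hle : ∀ (q : Z) (f : A), φ q f ≤ Φ f := fun q f => le_ciSup (hbdd f) q
  have hsup_le : ∀ (f : A) (c : ℝ), (∀ q : Z, φ q f ≤ c) → Φ f ≤ c := fun f c h =>
    ciSup_le h
  have hΦnonneg : ∀ f, 0 ≤ Φ f := fun f =>
    le_trans ((hφ ⟨q0, hq0⟩).nonneg f) (hle ⟨q0, hq0⟩ f)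
  have hΦ : IsBddPowMulSeminorm Φ := by
    constructor
    · exact hΦnonneg
    · have : (fun q : Z => φ q 0) = fun _ => (0 : ℝ) := funext fun q => (hφ q).map_zero
      simp only [hΦdef, this, ciSup_const]
    · have : (fun q : Z => φ q 1) = fun _ => (1 : ℝ) := funext fun q => (hφ q).map_one
      simp only [hΦdef, this, ciSup_const]
    · intro f
      have : (fun q : Z => φ q (-f)) = fun q : Z => φ q f :=
        funext fun q => (hφ q).map_neg f
      simp only [hΦdef, this]
    · intro f g
      exact hsup_le _ _ fun q =>
        le_trans ((hφ q).nonarch f g) (max_le_max (hle q f) (hle q g))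
    · intro f g
      exact hsup_le _ _ fun q =>
        le_trans ((hφ q).submul f g)
          (mul_le_mul (hle q f) (hle q g) ((hφ q).nonneg g) (hΦnonneg f))
    · intro f n hn
      have hn0 : n ≠ 0 := Nat.one_le_iff_ne_zero.mp hn
      apply le_antisymm
      · refine hsup_le _ _ fun q => ?_
        rw [(hφ q).pow_mul f n hn]
        exact pow_le_pow_left₀ ((hφ q).nonneg f) (hle q f) n
      · have h1 : Φ f ≤ (Φ (f ^ n)) ^ ((n : ℝ)⁻¹) := by
          refine hsup_le _ _ fun q => ?_
          have : φ q f = (φ q (f ^ n)) ^ ((n : ℝ)⁻¹) := by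
            rw [(hφ q).pow_mul f n hn, Real.pow_rpow_inv_natCast ((hφ q).nonneg f) hn0]
          rw [this]
          exact Real.rpow_le_rpow ((hφ q).nonneg _) (hle q _) (by positivity)
        calc Φ f ^ n ≤ ((Φ (f ^ n)) ^ ((n : ℝ)⁻¹)) ^ n :=
              pow_le_pow_left₀ (hΦnonneg f) h1 n
        _ = Φ (f ^ n) := Real.rpow_inv_natCast_pow (hΦnonneg _) hn0
    · exact ⟨1, one_pos, fun f => by
        simpa using hsup_le f ‖f‖ fun q => (hφ q).le_norm f⟩
  -- the ideal
  set I : Ideal A := ⨅ q : Z, (q.1.1).asIdeal with hIdef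
  have hmemI : ∀ f : A, f ∈ I ↔ ∀ q : Z, f ∈ q.1.1.asIdeal := by
    intro f; simp [hIdef, Ideal.mem_iInf]
  have hkerΦ : ∀ f, f ∈ I ↔ Φ f = 0 := by
    intro f
    constructor
    · intro hf
      have : (fun q : Z => φ q f) = fun _ => (0 : ℝ) :=
        funext fun q => (hker q f).mp ((hmemI f).mp hf q)
      simp only [hΦdef, this, ciSup_const]
    · intro hf
      refine (hmemI f).mpr fun q => (hker q f).mpr ?_
      exact le_antisymm (hf ▸ hle q f) ((hφ q).nonneg f)
  -- primality
  have hprime : I.IsPrime := by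
    constructor
    · intro htop
      have h1 : (1 : A) ∈ I := htop ▸ Submodule.mem_top
      exact (q0 : PrimeSpectrum A).isPrime.ne_top
        (Ideal.eq_top_of_isUnit_mem _ ((hmemI 1).mp h1 ⟨q0, hq0⟩) isUnit_one)
    · intro f g hfg
      by_contra hcon
      push_neg at hcon
      obtain ⟨hf, hg⟩ := hcon
      obtain ⟨q1, hq1⟩ := not_forall.mp (fun h => hf ((hmemI f).mpr h))
      obtain ⟨q2, hq2⟩ := not_forall.mp (fun h => hg ((hmemI g).mpr h))
      set U : Set (TopSpec A) := Subtype.val ⁻¹' (PrimeSpectrum.zeroLocus {f})ᶜ with hU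
      set V : Set (TopSpec A) := Subtype.val ⁻¹' (PrimeSpectrum.zeroLocus {g})ᶜ with hV
      have hUo : IsOpen U :=
        (PrimeSpectrum.isClosed_zeroLocus _).isOpen_compl.preimage continuous_subtype_val
      have hVo : IsOpen V :=
        (PrimeSpectrum.isClosed_zeroLocus _).isOpen_compl.preimage continuous_subtype_val
      have hq1' : (q1 : TopSpec A) ∈ Z ∩ U := by
        refine ⟨q1.2, ?_⟩
        simp only [hU, Set.mem_preimage, Set.mem_compl_iff, PrimeSpectrum.mem_zeroLocus,
          Set.singleton_subset_iff]
        exact hq1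
      have hq2' : (q2 : TopSpec A) ∈ Z ∩ V := by
        refine ⟨q2.2, ?_⟩
        simp only [hV, Set.mem_preimage, Set.mem_compl_iff, PrimeSpectrum.mem_zeroLocus,
          Set.singleton_subset_iff]
        exact hq2
      obtain ⟨q, hqZ, hqU, hqV⟩ := hZi.2 U V hUo hVo ⟨q1, hq1'⟩ ⟨q2, hq2'⟩
      simp only [hU, hV, Set.mem_preimage, Set.mem_compl_iff, PrimeSpectrum.mem_zeroLocus,
        Set.singleton_subset_iff] at hqU hqV
      have : f * g ∈ q.1.asIdeal := (hmemI (f * g)).mp hfg ⟨q, hqZ⟩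
      rcases q.1.isPrime.mem_or_mem this with h | h
      exacts [hqU h, hqV h]
  set P : TopSpec A := ⟨⟨I, hprime⟩, ⟨Φ, hΦ, hkerΦ⟩⟩ with hP
  -- closure of {P}
  have hclP : ∀ q : TopSpec A, q ∈ closure ({P} : Set (TopSpec A)) ↔ I ≤ q.1.asIdeal := by
    intro q
    rw [closure_subtype, Set.image_singleton, PrimeSpectrum.closure_singleton,
      PrimeSpectrum.mem_zeroLocus]
    exact ⟨fun h x hx => h hx, fun h x hx => h hx⟩
  -- description of Z
  obtain ⟨C, hCc, hCZ⟩ := isClosed_induced_iff.mp hZc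
  obtain ⟨S, rfl⟩ := (PrimeSpectrum.isClosed_iff_zeroLocus C).mp hCc
  have hSI : S ⊆ (I : Set A) := by
    intro a ha
    refine (hmemI a).mpr fun q => ?_
    obtain ⟨qv, hqv⟩ := q
    rw [← hCZ] at hqv
    exact hqv ha
  have hZmem : ∀ q : TopSpec A, q ∈ Z ↔ I ≤ q.1.asIdeal := by
    intro q
    constructor
    · intro hq
      exact iInf_le (fun q : Z => (q.1.1).asIdeal) ⟨q, hq⟩
    · intro hq
      rw [← hCZ]
      exact fun a ha => hq (hSI ha)
  have hPZ : closure ({P} : Set (TopSpec A)) = Z := by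
    ext q
    rw [hclP q, hZmem q]
  refine ⟨P, hPZ, fun P' hP' => ?_⟩
  exact (inseparable_iff_closure_eq.mpr (hP'.trans hPZ.symm)).eq
end

section
/- Let A be a seminormed ring. Every spectrally reduced prime ideal of A contains a spectrally reduced prime ideal that is minimal with respect to inclusion among the spectrally reduced prime ideals of A. -/
open Filter Topology

/-- The infimum of a nonempty chain of spectrally reduced ideals is spectrally reduced. -/
lemma isSpectrallyReduced_sInf_chain {A : Type*} [SeminormedCommRing A]
    (C : Set (Ideal A)) (hne : C.Nonempty) (hred : ∀ q ∈ C, IsSpectrallyReduced q) :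
    IsSpectrallyReduced (sInf C) := by
  classical
  choose ψ hψ hker using fun q : C => hred q.1 q.2
  haveI : Nonempty C := hne.to_subtype
  set φ : A → ℝ := fun f => sSup (Set.range fun q : C => ψ q f) with hφ
  have hbdd : ∀ f : A, BddAbove (Set.range fun q : C => ψ q f) := by
    intro f
    exact ⟨‖f‖, by rintro x ⟨q, rfl⟩; exact (hψ q).le_norm f⟩
  have hle : ∀ (f : A) (q : C), ψ q f ≤ φ f := fun f q =>
    le_csSup (hbdd f) ⟨q, rfl⟩
  have hsup_le : ∀ (f : A) (b : ℝ), (∀ q : C, ψ q f ≤ b) → φ f ≤ b := by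
    intro f b hb
    exact csSup_le (Set.range_nonempty _) (by rintro x ⟨q, rfl⟩; exact hb q)
  have hnonneg : ∀ f, 0 ≤ φ f := fun f =>
    le_trans ((hψ (Classical.arbitrary C)).nonneg f) (hle f _)
  refine ⟨φ, ⟨hnonneg, ?_, ?_, ?_, ?_, ?_, ?_, ?_⟩, ?_⟩
  · -- map_zero
    refine le_antisymm (hsup_le 0 0 fun q => le_of_eq ((hψ q).map_zero)) (hnonneg 0)
  · -- map_one
    refine le_antisymm (hsup_le 1 1 fun q => le_of_eq ((hψ q).map_one)) ?_
    exact le_trans (le_of_eq ((hψ (Classical.arbitrary C)).map_one).symm) (hle 1 _)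
  · -- map_neg
    intro f
    have hfun : (fun q : C => ψ q (-f)) = fun q : C => ψ q f :=
      funext fun q => (hψ q).map_neg f
    simp only [hφ, hfun]
  · -- nonarch
    intro f g
    refine hsup_le _ _ fun q => le_trans ((hψ q).nonarch f g) ?_
    exact max_le_max (hle f q) (hle g q)
  · -- submul
    intro f g
    refine hsup_le _ _ fun q => le_trans ((hψ q).submul f g) ?_
    exact mul_le_mul (hle f q) (hle g q) ((hψ q).nonneg g) (hnonneg f)
  · -- pow_mul
    intro f n hn
    have hmono : Monotone (fun x : ℝ => (max x 0) ^ n) := fun x y hxy =>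
      pow_le_pow_left₀ (le_max_right x 0) (max_le_max hxy le_rfl) n
    have hcont : ContinuousAt (fun x : ℝ => (max x 0) ^ n) (φ f) :=
      ((continuous_id.max continuous_const).pow n).continuousAt
    have key := hmono.map_csSup_of_continuousAt hcont (Set.range_nonempty _) (hbdd f)
    have h1 : (max (φ f) 0) ^ n = φ f ^ n := by rw [max_eq_left (hnonneg f)]
    have hcomp : ((fun x : ℝ => (max x 0) ^ n) ∘ fun q : C => ψ q f)
        = fun q : C => ψ q (f ^ n) := funext fun q => by
      show (max (ψ q f) 0) ^ n = ψ q (f ^ n)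
      rw [max_eq_left ((hψ q).nonneg f), (hψ q).pow_mul f n hn]
    have h2 : ((fun x : ℝ => (max x 0) ^ n) '' Set.range fun q : C => ψ q f)
        = Set.range fun q : C => ψ q (f ^ n) := by
      rw [← Set.range_comp, hcomp]
    rw [← h1, key, h2]
  · -- bounded
    exact ⟨1, one_pos, fun f => by
      rw [one_mul]; exact hsup_le f ‖f‖ fun q => (hψ q).le_norm f⟩
  · -- kernel
    intro f
    rw [Ideal.mem_sInf]
    constructor
    · intro hf
      refine le_antisymm (hsup_le f 0 fun q => le_of_eq ?_) (hnonneg f)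
      exact (hker q f).1 (hf q.2)
    · intro hf I hI
      have h0 : ψ ⟨I, hI⟩ f = 0 :=
        le_antisymm (hf ▸ hle f ⟨I, hI⟩) ((hψ ⟨I, hI⟩).nonneg f)
      exact (hker ⟨I, hI⟩ f).2 h0

/-- Every spectrally reduced prime ideal of a seminormed ring contains a minimal
spectrally reduced prime ideal. -/
theorem exists_minimal_spectrally_reduced_prime_le
    {A : Type*} [SeminormedCommRing A] [NormOneClass A]
    (hA : IsNonarchimedean (fun a : A => ‖a‖))
    (p : Ideal A) (hp : p.IsPrime) (hps : IsSpectrallyReduced p) :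
    ∃ q : Ideal A, q.IsPrime ∧ IsSpectrallyReduced q ∧ q ≤ p ∧
      ∀ r : Ideal A, r.IsPrime → IsSpectrallyReduced r → r ≤ q → r = q := by
  set S : Set (Ideal A)ᵒᵈ :=
    {q | (OrderDual.ofDual q).IsPrime ∧ IsSpectrallyReduced (OrderDual.ofDual q) ∧
      OrderDual.ofDual q ≤ p} with hS
  have key : ∀ c ⊆ S, IsChain (· ≤ ·) c → ∀ y ∈ c, ∃ ub ∈ S, ∀ z ∈ c, z ≤ ub := by
    intro c hcS hc y hy
    -- c is a chain in the dual order; as ideals it's a chain, take sInf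
    set C : Set (Ideal A) := OrderDual.ofDual '' c with hC
    have hCne : C.Nonempty := ⟨OrderDual.ofDual y, y, hy, rfl⟩
    have hCchain : IsChain (· ≤ ·) C := by
      rintro _ ⟨a, ha, rfl⟩ _ ⟨b, hb, rfl⟩ hab
      rcases hc ha hb (fun h => hab (congrArg OrderDual.ofDual h)) with h | h
      · exact Or.inr h
      · exact Or.inl h
    have hCsub : ∀ q ∈ C, q.IsPrime ∧ IsSpectrallyReduced q ∧ q ≤ p := by
      rintro _ ⟨a, ha, rfl⟩
      exact hcS ha
    refine ⟨OrderDual.toDual (sInf C), ⟨?_, ?_, ?_⟩, ?_⟩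
    · -- sInf C is prime
      constructor
      · intro htop
        obtain ⟨q, hq⟩ := hCne
        have : q = ⊤ := top_le_iff.1 (htop ▸ sInf_le hq)
        exact (hCsub q hq).1.ne_top this
      · intro x y' hxy
        by_cases hx : x ∈ sInf C
        · exact Or.inl hx
        · refine Or.inr ?_
          show y' ∈ sInf C
          have hxy' : x * y' ∈ sInf C := hxy
          rw [Ideal.mem_sInf] at hx hxy' ⊢
          push_neg at hx
          obtain ⟨q1, hq1C, hxq1⟩ := hx
          intro q hqC
          rcases hCchain.total hqC hq1C with h | h
          · exact ((hCsub q hqC).1.mem_or_mem (hxy' hqC)).resolve_left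
              (fun hxq => hxq1 (h hxq))
          · exact h (((hCsub q1 hq1C).1.mem_or_mem (hxy' hq1C)).resolve_left hxq1)
    · exact isSpectrallyReduced_sInf_chain C hCne fun q hq => (hCsub q hq).2.1
    · obtain ⟨q, hq⟩ := hCne
      exact le_trans (sInf_le hq) (hCsub q hq).2.2
    · intro z hz
      show sInf C ≤ OrderDual.ofDual z
      exact sInf_le (show OrderDual.ofDual z ∈ C from ⟨z, hz, rfl⟩)
  obtain ⟨m, hpm, hmS, hmax⟩ := zorn_le_nonempty₀ S key (OrderDual.toDual p)
    ⟨hp, hps, le_rfl⟩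
  refine ⟨OrderDual.ofDual m, hmS.1, hmS.2.1, hpm, fun r hr hrs hrm => ?_⟩
  have hrS : OrderDual.toDual r ∈ S := ⟨hr, hrs, le_trans hrm hmS.2.2⟩
  exact le_antisymm hrm (hmax hrS hrm)
end

section
/- Let A be a seminormed ring and let I be a proper ideal of A that is not dense in A. Then I is contained in a spectrally reduced prime ideal of A. In particular, the topological spectrum TopSpec(A) of any seminormed ring is nonempty. -/
open Filter Topology

open Metric in
section

open Filter Topology Metric

section Aux
variable {A : Type*} [SeminormedCommRing A] [NormOneClass A]

private lemma my_eps_le {a b : ℝ} (h : ∀ ε : ℝ, 0 < ε → a ≤ b + ε) : a ≤ b := by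
  by_contra hc
  push_neg at hc
  have := h ((a - b)/2) (by linarith)
  linarith

/-- If an ideal contains an element within distance <1 of 1, it is dense. -/
private lemma aux_dense (J : Ideal A) {x : A} (hx : x ∈ J) (h1 : ‖1 - x‖ < 1) :
    Dense (J : Set A) := by
  have hdvd : ∀ k : ℕ, x ∣ 1 - (1 - x) ^ k := by
    intro k
    induction k with
    | zero => simp
    | succ k ih =>
      have hid : 1 - (1 - x) ^ (k+1) = (1 - (1 - x) ^ k) * (1 - x) + x := by ring
      rw [hid]
      exact dvd_add (ih.mul_right _) dvd_rfl
  intro a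
  rw [Metric.mem_closure_iff]
  intro ε hε
  have hlim : Tendsto (fun k : ℕ => ‖a‖ * ‖1 - x‖ ^ k) atTop (𝓝 0) := by
    simpa using (tendsto_pow_atTop_nhds_zero_of_lt_one (norm_nonneg _) h1).const_mul ‖a‖
  obtain ⟨k, hk⟩ := (hlim.eventually (gt_mem_nhds hε)).exists
  obtain ⟨c, hc⟩ := hdvd k
  refine ⟨a * (1 - (1 - x) ^ k), ?_, ?_⟩
  · rw [hc]
    exact J.mul_mem_left a (J.mul_mem_right c hx)
  · have : a - a * (1 - (1 - x) ^ k) = a * (1 - x) ^ k := by ring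
    rw [dist_eq_norm, this]
    calc ‖a * (1 - x) ^ k‖ ≤ ‖a‖ * ‖(1 - x) ^ k‖ := norm_mul_le _ _
    _ ≤ ‖a‖ * ‖1 - x‖ ^ k := by
        gcongr
        rcases Nat.eq_zero_or_pos k with rfl | hk
        · simp
        · exact norm_pow_le' _ hk
    _ < ε := hk

private lemma aux_not_dense_iff (J : Ideal A) :
    ¬ Dense (J : Set A) ↔ ∀ x ∈ J, 1 ≤ ‖1 - x‖ := by
  constructor
  · intro h x hx
    by_contra hlt
    push_neg at hlt
    exact h (aux_dense J hx hlt)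
  · intro h hd
    obtain ⟨x, hxJ, hx⟩ := Metric.mem_closure_iff.mp (hd 1) 1 one_pos
    rw [dist_eq_norm] at hx
    exact absurd hx (not_lt.mpr (h x hxJ))

private lemma aux_zorn (I : Ideal A) (hInd : ¬ Dense (I : Set A)) :
    ∃ m : Ideal A, I ≤ m ∧ ¬ Dense (m : Set A) ∧
      ∀ J : Ideal A, m ≤ J → ¬ Dense (J : Set A) → J = m := by
  have hub : ∀ c ⊆ {J : Ideal A | ¬ Dense (J : Set A)}, IsChain (· ≤ ·) c →
      ∀ y ∈ c, ∃ ub ∈ {J : Ideal A | ¬ Dense (J : Set A)}, ∀ z ∈ c, z ≤ ub := by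
    intro c hcs hchain y hy
    refine ⟨sSup c, ?_, fun z hz => le_sSup hz⟩
    rw [Set.mem_setOf_eq, aux_not_dense_iff]
    intro x hx
    obtain ⟨J, hJc, hxJ⟩ := (Submodule.mem_sSup_of_directed ⟨y, hy⟩ hchain.directedOn).1 hx
    exact (aux_not_dense_iff J).mp (hcs hJc) x hxJ
  obtain ⟨m, him, hm⟩ := zorn_le_nonempty₀ {J : Ideal A | ¬ Dense (J : Set A)} hub I hInd
  exact ⟨m, him, hm.prop, fun J hmJ hJ => le_antisymm (hm.le_of_ge hJ hmJ) hmJ⟩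

end Aux

section QQ
variable {A : Type*} [SeminormedCommRing A] [NormOneClass A]

/-- The quotient seminorm: distance to the ideal. -/
private noncomputable def qq (m : Ideal A) (f : A) : ℝ := Metric.infDist f (m : Set A)

private lemma mne (m : Ideal A) : (m : Set A).Nonempty := ⟨0, m.zero_mem⟩

private lemma qq_nonneg (m : Ideal A) (f : A) : 0 ≤ qq m f := Metric.infDist_nonneg

private lemma qq_le (m : Ideal A) (f : A) {x : A} (hx : x ∈ m) : qq m f ≤ ‖f - x‖ := by
  simpa [qq, dist_eq_norm] using Metric.infDist_le_dist_of_mem (x := f) (show x ∈ (m : Set A) from hx)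

private lemma qq_le_norm (m : Ideal A) (f : A) : qq m f ≤ ‖f‖ := by
  simpa using qq_le m f m.zero_mem

private lemma qq_mem (m : Ideal A) {f : A} (hf : f ∈ m) : qq m f = 0 :=
  Metric.infDist_zero_of_mem hf

private lemma exists_qq_lt (m : Ideal A) (f : A) {c : ℝ} (hc : qq m f < c) :
    ∃ x ∈ m, ‖f - x‖ < c := by
  obtain ⟨x, hx, hd⟩ := (Metric.infDist_lt_iff (mne m)).mp hc
  exact ⟨x, hx, by rwa [dist_eq_norm] at hd⟩

private lemma qq_one (m : Ideal A) (hm : ¬ Dense (m : Set A)) : qq m 1 = 1 := by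
  refine le_antisymm (by simpa using qq_le_norm m 1) ?_
  by_contra h
  push_neg at h
  obtain ⟨x, hx, hd⟩ := exists_qq_lt m 1 h
  exact absurd hd (not_lt.mpr ((aux_not_dense_iff m).mp hm x hx))

private lemma qq_nonarch (hA : IsNonarchimedean (fun a : A => ‖a‖)) (m : Ideal A) (f g : A) :
    qq m (f + g) ≤ max (qq m f) (qq m g) := by
  apply le_of_forall_gt_imp_ge_of_dense
  intro c hc
  obtain ⟨x, hx, hdx⟩ := exists_qq_lt m f (lt_of_le_of_lt (le_max_left _ _) hc)
  obtain ⟨y, hy, hdy⟩ := exists_qq_lt m g (lt_of_le_of_lt (le_max_right _ _) hc)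
  have h1 : qq m (f + g) ≤ ‖f + g - (x + y)‖ := qq_le m _ (m.add_mem hx hy)
  have h2 : f + g - (x + y) = (f - x) + (g - y) := by ring
  rw [h2] at h1
  exact h1.trans ((hA _ _).trans (max_le hdx.le hdy.le))

private lemma qq_submul (m : Ideal A) (f g : A) : qq m (f * g) ≤ qq m f * qq m g := by
  have key : ∀ ε : ℝ, 0 < ε → qq m (f * g) ≤ (qq m f + ε) * (qq m g + ε) := by
    intro ε hε
    obtain ⟨x, hx, hdx⟩ := exists_qq_lt m f (show qq m f < qq m f + ε by linarith)
    obtain ⟨y, hy, hdy⟩ := exists_qq_lt m g (show qq m g < qq m g + ε by linarith)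
    have hw : f * y + x * g - x * y ∈ m := by
      exact m.sub_mem (m.add_mem (m.mul_mem_left f hy) (m.mul_mem_right g hx)) (m.mul_mem_left x hy)
    have h1 : qq m (f * g) ≤ ‖f * g - (f * y + x * g - x * y)‖ := qq_le m _ hw
    have h2 : f * g - (f * y + x * g - x * y) = (f - x) * (g - y) := by ring
    rw [h2] at h1
    calc qq m (f * g) ≤ ‖f - x‖ * ‖g - y‖ := h1.trans (norm_mul_le _ _)
    _ ≤ (qq m f + ε) * (qq m g + ε) := by
        apply mul_le_mul hdx.le hdy.le (norm_nonneg _); linarith [qq_nonneg m f]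
  have hlim : Tendsto (fun ε : ℝ => (qq m f + ε) * (qq m g + ε)) (𝓝[>] 0)
      (𝓝 (qq m f * qq m g)) := by
    have hcont : Tendsto (fun ε : ℝ => (qq m f + ε) * (qq m g + ε)) (𝓝 0)
        (𝓝 ((qq m f + 0) * (qq m g + 0))) := by
      apply Continuous.tendsto
      continuity
    simpa using hcont.mono_left nhdsWithin_le_nhds
  exact ge_of_tendsto hlim (Filter.eventually_iff_exists_mem.mpr
    ⟨Set.Ioi 0, self_mem_nhdsWithin, fun ε hε => key ε hε⟩)

private lemma qq_neg (m : Ideal A) (f : A) : qq m (-f) = qq m f := by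
  have h : ∀ g : A, qq m (-g) ≤ qq m g := by
    intro g
    apply le_of_forall_gt_imp_ge_of_dense
    intro c hc
    obtain ⟨x, hx, hdx⟩ := exists_qq_lt m g hc
    have := qq_le m (-g) (m.neg_mem hx)
    calc qq m (-g) ≤ ‖-g - -x‖ := this
    _ = ‖g - x‖ := by rw [show -g - -x = -(g - x) by ring, norm_neg]
    _ ≤ c := hdx.le
  exact le_antisymm (h f) (by simpa using h (-f))

private lemma qq_pow (m : Ideal A) (hm : ¬ Dense (m : Set A)) (f : A) :
    ∀ k : ℕ, qq m (f ^ k) ≤ qq m f ^ k := by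
  intro k
  induction k with
  | zero => simp [qq_one m hm]
  | succ k ih =>
    calc qq m (f ^ (k+1)) = qq m (f * f ^ k) := by rw [pow_succ, mul_comm]
    _ ≤ qq m f * qq m (f ^ k) := qq_submul m _ _
    _ ≤ qq m f * qq m f ^ k := by
        apply mul_le_mul_of_nonneg_left ih (qq_nonneg m f)
    _ = qq m f ^ (k+1) := by ring

private lemma qq_natmul (hA : IsNonarchimedean (fun a : A => ‖a‖)) (m : Ideal A) (x : A) :
    ∀ N : ℕ, qq m (x * (N : A)) ≤ qq m x := by
  intro N
  induction N with
  | zero =>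
    have : x * ((0:ℕ) : A) = 0 := by push_cast; ring
    rw [this, qq_mem m m.zero_mem]
    exact qq_nonneg m x
  | succ N ih =>
    have h : x * ((N : A) + 1) = x * (N : A) + x := by ring
    push_cast
    rw [h]
    exact (qq_nonarch hA m _ _).trans (max_le ih le_rfl)

private lemma qq_sum_le (hA : IsNonarchimedean (fun a : A => ‖a‖)) (m : Ideal A)
    {ι : Type*} (s : Finset ι) (g : ι → A) {B : ℝ} (hB : 0 ≤ B)
    (h : ∀ i ∈ s, qq m (g i) ≤ B) : qq m (∑ i ∈ s, g i) ≤ B := by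
  classical
  induction s using Finset.induction with
  | empty => simpa [qq_mem m (Ideal.zero_mem m)] using hB
  | @insert a s hnot ih =>
    rw [Finset.sum_insert hnot]
    refine (qq_nonarch hA m _ _).trans (max_le (h a (Finset.mem_insert_self a s)) ?_)
    exact ih fun i hi => h i (Finset.mem_insert_of_mem hi)

end QQ

section Phi
variable {A : Type*} [SeminormedCommRing A] [NormOneClass A]

/-- The spectral seminorm attached to the ideal `m`. -/
private noncomputable def phi (m : Ideal A) (f : A) : ℝ :=
  ⨅ n : ℕ, qq m (f ^ (n + 1)) ^ (((n + 1 : ℕ) : ℝ))⁻¹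

private lemma phi_bdd (m : Ideal A) (f : A) :
    BddBelow (Set.range fun n : ℕ => qq m (f ^ (n + 1)) ^ (((n + 1 : ℕ) : ℝ))⁻¹) := by
  refine ⟨0, fun x hx => ?_⟩
  obtain ⟨n, rfl⟩ := hx
  exact Real.rpow_nonneg (qq_nonneg m _) _

private lemma phi_nonneg (m : Ideal A) (f : A) : 0 ≤ phi m f :=
  le_ciInf fun n => Real.rpow_nonneg (qq_nonneg m _) _

private lemma phi_le (m : Ideal A) (f : A) (n : ℕ) :
    phi m f ≤ qq m (f ^ (n + 1)) ^ (((n + 1 : ℕ) : ℝ))⁻¹ :=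
  ciInf_le (phi_bdd m f) n

private lemma phi_le_qq (m : Ideal A) (f : A) : phi m f ≤ qq m f := by
  have := phi_le m f 0
  simpa using this

private lemma phi_le_norm (m : Ideal A) (f : A) : phi m f ≤ ‖f‖ :=
  (phi_le_qq m f).trans (qq_le_norm m f)

private lemma phi_one (m : Ideal A) (hm : ¬ Dense (m : Set A)) : phi m 1 = 1 := by
  have h : ∀ n : ℕ, qq m ((1:A) ^ (n + 1)) ^ (((n + 1 : ℕ) : ℝ))⁻¹ = 1 := by
    intro n
    rw [one_pow, qq_one m hm, Real.one_rpow]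
  unfold phi
  simp only [h]
  exact ciInf_const

private lemma phi_mem (m : Ideal A) {f : A} (hf : f ∈ m) : phi m f = 0 :=
  le_antisymm (by rw [← qq_mem m hf]; exact phi_le_qq m f) (phi_nonneg m f)

private lemma phi_zero (m : Ideal A) : phi m 0 = 0 := phi_mem m m.zero_mem

private lemma phi_neg (m : Ideal A) (f : A) : phi m (-f) = phi m f := by
  unfold phi
  congr 1
  funext n
  congr 1
  rcases Nat.even_or_odd (n + 1) with he | ho
  · rw [he.neg_pow]
  · rw [ho.neg_pow, qq_neg]

/-- Key growth estimate: `qq (f^k) ≤ M * (phi f + ε)^k` for a uniform constant `M`. -/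
private lemma key_growth (m : Ideal A) (hm : ¬ Dense (m : Set A)) (f : A) {ε : ℝ} (hε : 0 < ε) :
    ∃ M : ℝ, 1 ≤ M ∧ ∀ k : ℕ, qq m (f ^ k) ≤ M * (phi m f + ε) ^ k := by
  set r : ℝ := phi m f with hr
  have hr0 : 0 ≤ r := phi_nonneg m f
  have hrε : 0 < r + ε := by linarith
  have hlt : phi m f < r + ε := by linarith
  obtain ⟨N, hN⟩ := exists_lt_of_ciInf_lt hlt
  set n₀ : ℕ := N + 1 with hn₀
  have hn₀pos : 0 < n₀ := Nat.succ_pos N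
  have hc : qq m (f ^ n₀) < (r + ε) ^ n₀ := by
    have h1 : (qq m (f ^ n₀) ^ (((n₀ : ℕ) : ℝ))⁻¹) ^ n₀ = qq m (f ^ n₀) :=
      Real.rpow_inv_natCast_pow (qq_nonneg m _) hn₀pos.ne'
    calc qq m (f ^ n₀) = (qq m (f ^ n₀) ^ (((n₀ : ℕ) : ℝ))⁻¹) ^ n₀ := h1.symm
    _ < (r + ε) ^ n₀ := by
        apply pow_lt_pow_left₀ hN (Real.rpow_nonneg (qq_nonneg m _) _) hn₀pos.ne'
  set Q : ℝ := (max ‖f‖ 1) ^ n₀ with hQ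
  set R : ℝ := (max (r + ε)⁻¹ 1) ^ n₀ with hR
  have hQ1 : (1:ℝ) ≤ Q := one_le_pow₀ (le_max_right _ _)
  have hR1 : (1:ℝ) ≤ R := one_le_pow₀ (le_max_right _ _)
  refine ⟨Q * R, by nlinarith, ?_⟩
  intro k
  set a : ℕ := k / n₀ with ha
  set b : ℕ := k % n₀ with hb
  have hk : n₀ * a + b = k := Nat.div_add_mod k n₀
  have hbn : b ≤ n₀ := (Nat.mod_lt k hn₀pos).le
  have hbk : b ≤ k := hb ▸ Nat.mod_le k n₀
  -- decompose the power
  have hdecomp : f ^ k = (f ^ n₀) ^ a * f ^ b := by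
    rw [← pow_mul, ← pow_add, hk]
  -- bound each factor
  have h1 : qq m (f ^ k) ≤ qq m ((f ^ n₀) ^ a) * qq m (f ^ b) := by
    rw [hdecomp]; exact qq_submul m _ _
  have h2 : qq m ((f ^ n₀) ^ a) ≤ ((r + ε) ^ n₀) ^ a := by
    calc qq m ((f ^ n₀) ^ a) ≤ (qq m (f ^ n₀)) ^ a := qq_pow m hm _ a
    _ ≤ ((r + ε) ^ n₀) ^ a := pow_le_pow_left₀ (qq_nonneg m _) hc.le a
  have h3 : qq m (f ^ b) ≤ Q := by
    calc qq m (f ^ b) ≤ (qq m f) ^ b := qq_pow m hm _ b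
    _ ≤ (max ‖f‖ 1) ^ b :=
        pow_le_pow_left₀ (qq_nonneg m f) ((qq_le_norm m f).trans (le_max_left _ _)) b
    _ ≤ Q := pow_le_pow_right₀ (le_max_right _ _) hbn
  have h4 : ((r + ε) ^ n₀) ^ a ≤ (r + ε) ^ k * R := by
    have hsplit : (r + ε) ^ k = ((r + ε) ^ n₀) ^ a * (r + ε) ^ b := by
      rw [← pow_mul, ← pow_add, hk]
    have hRb : (1:ℝ) ≤ (r + ε) ^ b * R := by
      have hinv : ((r + ε) ^ b)⁻¹ ≤ R := by
        calc ((r + ε) ^ b)⁻¹ = ((r + ε)⁻¹) ^ b := by rw [inv_pow]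
        _ ≤ (max (r + ε)⁻¹ 1) ^ b := pow_le_pow_left₀ (by positivity) (le_max_left _ _) b
        _ ≤ R := pow_le_pow_right₀ (le_max_right _ _) hbn
      calc (1:ℝ) = (r + ε) ^ b * ((r + ε) ^ b)⁻¹ := by
            rw [mul_inv_cancel₀ (by positivity)]
      _ ≤ (r + ε) ^ b * R := by
            apply mul_le_mul_of_nonneg_left hinv (by positivity)
    calc ((r + ε) ^ n₀) ^ a = ((r + ε) ^ n₀) ^ a * 1 := by ring
    _ ≤ ((r + ε) ^ n₀) ^ a * ((r + ε) ^ b * R) := by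
        apply mul_le_mul_of_nonneg_left hRb (by positivity)
    _ = (r + ε) ^ k * R := by rw [hsplit]; ring
  calc qq m (f ^ k) ≤ qq m ((f ^ n₀) ^ a) * qq m (f ^ b) := h1
  _ ≤ ((r + ε) ^ n₀) ^ a * Q := by
      apply mul_le_mul h2 h3 (qq_nonneg m _) (by positivity)
  _ ≤ ((r + ε) ^ k * R) * Q := by
      apply mul_le_mul_of_nonneg_right h4 (by linarith)
  _ = Q * R * (r + ε) ^ k := by ring

end Phi

section Phi2
variable {A : Type*} [SeminormedCommRing A] [NormOneClass A]

private lemma rpow_aux_tendsto {M : ℝ} (hM : 1 ≤ M) :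
    Tendsto (fun n : ℕ => M ^ (((n + 1 : ℕ) : ℝ))⁻¹) atTop (𝓝 1) := by
  have hMpos : 0 < M := lt_of_lt_of_le one_pos hM
  have h0 : Tendsto (fun n : ℕ => (((n + 1 : ℕ) : ℝ))⁻¹) atTop (𝓝 0) := by
    have := tendsto_one_div_add_atTop_nhds_zero_nat (𝕜 := ℝ)
    simpa [one_div] using this
  have h1 : Tendsto (fun n : ℕ => Real.log M * (((n + 1 : ℕ) : ℝ))⁻¹) atTop (𝓝 0) := by
    simpa using h0.const_mul (Real.log M)
  have h2 : Tendsto (fun n : ℕ => Real.exp (Real.log M * (((n + 1 : ℕ) : ℝ))⁻¹)) atTop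
      (𝓝 (Real.exp 0)) := (Real.continuous_exp.tendsto 0).comp h1
  rw [Real.exp_zero] at h2
  convert h2 using 2 with n
  rw [Real.rpow_def_of_pos hMpos]

private lemma le_of_le_rpow_lim {M t a : ℝ} (hM : 1 ≤ M) (ht : 0 ≤ t)
    (h : ∀ n : ℕ, a ≤ (M * t ^ (n + 1)) ^ (((n + 1 : ℕ) : ℝ))⁻¹) : a ≤ t := by
  have hMpos : (0:ℝ) < M := lt_of_lt_of_le one_pos hM
  have heq : ∀ n : ℕ, (M * t ^ (n + 1)) ^ (((n + 1 : ℕ) : ℝ))⁻¹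
      = M ^ (((n + 1 : ℕ) : ℝ))⁻¹ * t := by
    intro n
    rw [Real.mul_rpow hMpos.le (by positivity)]
    congr 1
    exact Real.pow_rpow_inv_natCast ht (Nat.succ_ne_zero n)
  have hlim : Tendsto (fun n : ℕ => M ^ (((n + 1 : ℕ) : ℝ))⁻¹ * t) atTop (𝓝 (1 * t)) :=
    (rpow_aux_tendsto hM).mul_const t
  rw [one_mul] at hlim
  exact ge_of_tendsto' hlim fun n => (heq n) ▸ h n

private lemma phi_nonarch (hA : IsNonarchimedean (fun a : A => ‖a‖)) (m : Ideal A)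
    (hm : ¬ Dense (m : Set A)) (f g : A) :
    phi m (f + g) ≤ max (phi m f) (phi m g) := by
  apply my_eps_le
  intro ε hε
  obtain ⟨Mf, hMf1, hMf⟩ := key_growth m hm f hε
  obtain ⟨Mg, hMg1, hMg⟩ := key_growth m hm g hε
  set t : ℝ := max (phi m f) (phi m g) + ε with hts
  have ht0 : 0 ≤ t := by
    have := phi_nonneg m f
    have := le_max_left (phi m f) (phi m g)
    simp only [hts]
    linarith
  have hft : phi m f + ε ≤ t := by simp only [hts]; gcongr; exact le_max_left _ _
  have hgt : phi m g + ε ≤ t := by simp only [hts]; gcongr; exact le_max_right _ _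
  have hf0 : 0 ≤ phi m f + ε := by linarith [phi_nonneg m f]
  have hg0 : 0 ≤ phi m g + ε := by linarith [phi_nonneg m g]
  apply le_of_le_rpow_lim (M := Mf * Mg) (by nlinarith) ht0
  intro n
  refine (phi_le m (f + g) n).trans ?_
  apply Real.rpow_le_rpow (qq_nonneg m _) ?_ (by positivity)
  -- binomial expansion
  rw [add_pow]
  apply qq_sum_le hA m _ _ (by positivity)
  intro k hk
  have hkn : k ≤ n + 1 := Nat.lt_succ_iff.mp (Finset.mem_range.mp hk)
  calc qq m (f ^ k * g ^ (n + 1 - k) * ((n+1).choose k : A))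
      ≤ qq m (f ^ k * g ^ (n + 1 - k)) := qq_natmul hA m _ _
  _ ≤ qq m (f ^ k) * qq m (g ^ (n + 1 - k)) := qq_submul m _ _
  _ ≤ (Mf * (phi m f + ε) ^ k) * (Mg * (phi m g + ε) ^ (n + 1 - k)) := by
      apply mul_le_mul (hMf k) (hMg (n + 1 - k)) (qq_nonneg m _) (by positivity)
  _ ≤ (Mf * t ^ k) * (Mg * t ^ (n + 1 - k)) := by
      have h1 : (phi m f + ε) ^ k ≤ t ^ k := pow_le_pow_left₀ hf0 hft k
      have h2 : (phi m g + ε) ^ (n + 1 - k) ≤ t ^ (n + 1 - k) := pow_le_pow_left₀ hg0 hgt _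
      apply mul_le_mul
      · exact mul_le_mul_of_nonneg_left h1 (by linarith)
      · exact mul_le_mul_of_nonneg_left h2 (by linarith)
      · positivity
      · positivity
  _ = Mf * Mg * (t ^ k * t ^ (n + 1 - k)) := by ring
  _ = Mf * Mg * t ^ (n + 1) := by rw [← pow_add, Nat.add_sub_cancel' hkn]

private lemma phi_submul (m : Ideal A) (hm : ¬ Dense (m : Set A)) (f g : A) :
    phi m (f * g) ≤ phi m f * phi m g := by
  have key : ∀ ε : ℝ, 0 < ε → phi m (f * g) ≤ (phi m f + ε) * (phi m g + ε) := by
    intro ε hε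
    obtain ⟨Mf, hMf1, hMf⟩ := key_growth m hm f hε
    obtain ⟨Mg, hMg1, hMg⟩ := key_growth m hm g hε
    have hf0 : 0 ≤ phi m f + ε := by linarith [phi_nonneg m f]
    have hg0 : 0 ≤ phi m g + ε := by linarith [phi_nonneg m g]
    apply le_of_le_rpow_lim (M := Mf * Mg) (by nlinarith) (by positivity)
    intro n
    refine (phi_le m (f * g) n).trans ?_
    apply Real.rpow_le_rpow (qq_nonneg m _) ?_ (by positivity)
    rw [mul_pow]
    calc qq m (f ^ (n+1) * g ^ (n+1)) ≤ qq m (f ^ (n+1)) * qq m (g ^ (n+1)) := qq_submul m _ _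
    _ ≤ (Mf * (phi m f + ε) ^ (n+1)) * (Mg * (phi m g + ε) ^ (n+1)) := by
        apply mul_le_mul (hMf (n+1)) (hMg (n+1)) (qq_nonneg m _) (by positivity)
    _ = Mf * Mg * ((phi m f + ε) * (phi m g + ε)) ^ (n + 1) := by rw [mul_pow]; ring
  have hlim : Tendsto (fun ε : ℝ => (phi m f + ε) * (phi m g + ε)) (𝓝[>] 0)
      (𝓝 (phi m f * phi m g)) := by
    have hcont : Tendsto (fun ε : ℝ => (phi m f + ε) * (phi m g + ε)) (𝓝 0)
        (𝓝 ((phi m f + 0) * (phi m g + 0))) := by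
      apply Continuous.tendsto
      continuity
    simpa using hcont.mono_left nhdsWithin_le_nhds
  exact ge_of_tendsto hlim (Filter.eventually_iff_exists_mem.mpr
    ⟨Set.Ioi 0, self_mem_nhdsWithin, fun ε hε => key ε hε⟩)

end Phi2

section Phi3
variable {A : Type*} [SeminormedCommRing A] [NormOneClass A]

private lemma phi_pow (m : Ideal A) (hm : ¬ Dense (m : Set A)) (f : A) (k : ℕ) (hk : 1 ≤ k) :
    phi m (f ^ k) = phi m f ^ k := by
  have hk0 : k ≠ 0 := Nat.one_le_iff_ne_zero.mp hk
  apply le_antisymm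
  · -- phi (f^k) ≤ (phi f)^k
    have step1 : ∀ n : ℕ, phi m (f ^ k) ≤ (qq m (f ^ (n + 1)) ^ (((n + 1 : ℕ) : ℝ))⁻¹) ^ k := by
      intro n
      have h1 : phi m (f ^ k) ≤ qq m ((f ^ k) ^ (n + 1)) ^ (((n + 1 : ℕ) : ℝ))⁻¹ :=
        phi_le m (f ^ k) n
      have h2 : qq m ((f ^ k) ^ (n + 1)) ≤ qq m (f ^ (n + 1)) ^ k := by
        have : (f ^ k) ^ (n + 1) = (f ^ (n + 1)) ^ k := by
          rw [← pow_mul, ← pow_mul, mul_comm]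
        rw [this]
        exact qq_pow m hm _ k
      refine h1.trans ?_
      calc qq m ((f ^ k) ^ (n + 1)) ^ (((n + 1 : ℕ) : ℝ))⁻¹
          ≤ (qq m (f ^ (n + 1)) ^ k) ^ (((n + 1 : ℕ) : ℝ))⁻¹ :=
            Real.rpow_le_rpow (qq_nonneg m _) h2 (by positivity)
      _ = (qq m (f ^ (n + 1)) ^ (((n + 1 : ℕ) : ℝ))⁻¹) ^ k := by
          rw [← Real.rpow_natCast (qq m (f ^ (n + 1))) k, ← Real.rpow_mul (qq_nonneg m _),
            mul_comm, Real.rpow_mul (qq_nonneg m _), Real.rpow_natCast]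
    have hP0 : 0 ≤ phi m (f ^ k) := phi_nonneg m _
    have step2 : phi m (f ^ k) ^ ((k : ℝ))⁻¹ ≤ phi m f := by
      apply le_ciInf
      intro n
      have := step1 n
      calc phi m (f ^ k) ^ ((k : ℝ))⁻¹
          ≤ ((qq m (f ^ (n + 1)) ^ (((n + 1 : ℕ) : ℝ))⁻¹) ^ k) ^ ((k : ℝ))⁻¹ :=
            Real.rpow_le_rpow hP0 (step1 n) (by positivity)
      _ = qq m (f ^ (n + 1)) ^ (((n + 1 : ℕ) : ℝ))⁻¹ :=
            Real.pow_rpow_inv_natCast (Real.rpow_nonneg (qq_nonneg m _) _) hk0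
    calc phi m (f ^ k) = (phi m (f ^ k) ^ ((k : ℝ))⁻¹) ^ k :=
          (Real.rpow_inv_natCast_pow hP0 hk0).symm
    _ ≤ phi m f ^ k := pow_le_pow_left₀ (Real.rpow_nonneg hP0 _) step2 k
  · -- (phi f)^k ≤ phi (f^k)
    apply le_ciInf
    intro n
    have hidx : (k * (n + 1) - 1) + 1 = k * (n + 1) := by
      have : 1 ≤ k * (n + 1) := Nat.one_le_iff_ne_zero.mpr (by positivity)
      omega
    have h1 : phi m f ≤ qq m (f ^ (k * (n + 1))) ^ (((k * (n + 1) : ℕ) : ℝ))⁻¹ := by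
      have := phi_le m f (k * (n + 1) - 1)
      rwa [hidx] at this
    have h2 : (qq m (f ^ (k * (n + 1))) ^ (((k * (n + 1) : ℕ) : ℝ))⁻¹) ^ k
        = qq m ((f ^ k) ^ (n + 1)) ^ (((n + 1 : ℕ) : ℝ))⁻¹ := by
      have harg : (f ^ k) ^ (n + 1) = f ^ (k * (n + 1)) := by rw [← pow_mul]
      rw [harg]
      rw [← Real.rpow_natCast (qq m (f ^ (k * (n + 1))) ^ (((k * (n + 1) : ℕ) : ℝ))⁻¹) k,
        ← Real.rpow_mul (qq_nonneg m _)]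
      congr 1
      have hkR : ((k : ℕ) : ℝ) ≠ 0 := Nat.cast_ne_zero.mpr hk0
      have hnR : (((n + 1 : ℕ)) : ℝ) ≠ 0 := Nat.cast_ne_zero.mpr (Nat.succ_ne_zero n)
      push_cast
      field_simp
    calc phi m f ^ k ≤ (qq m (f ^ (k * (n + 1))) ^ (((k * (n + 1) : ℕ) : ℝ))⁻¹) ^ k :=
          pow_le_pow_left₀ (phi_nonneg m f) h1 k
    _ = qq m ((f ^ k) ^ (n + 1)) ^ (((n + 1 : ℕ) : ℝ))⁻¹ := h2

end Phi3

end


/-- A non-dense proper ideal of a seminormed ring is contained in a spectrally reduced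
prime ideal; in particular, the topological spectrum is nonempty. -/
theorem non_dense_ideal_le_spectrally_reduced_prime
    {A : Type*} [SeminormedCommRing A] [NormOneClass A]
    (hA : IsNonarchimedean (fun a : A => ‖a‖))
    (I : Ideal A) (hI : I ≠ ⊤) (hInd : ¬ Dense (I : Set A)) :
    (∃ p : Ideal A, p.IsPrime ∧ IsSpectrallyReduced p ∧ I ≤ p) ∧
      Nonempty (TopSpec A) := by
  obtain ⟨m, hIm, hmnd, hmax⟩ := aux_zorn I hInd
  -- any strictly larger ideal is dense
  have hdense : ∀ f : A, f ∉ m → Dense ((m ⊔ Ideal.span {f} : Ideal A) : Set A) := by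
    intro f hf
    by_contra hnd
    have := hmax _ le_sup_left hnd
    exact hf (this ▸ (le_sup_right : Ideal.span {f} ≤ m ⊔ Ideal.span {f})
      (Ideal.mem_span_singleton_self f))
  -- m is prime
  have hprime : m.IsPrime := by
    constructor
    · intro htop
      apply hmnd
      rw [htop]
      exact dense_univ
    · intro f g hfg
      by_contra hcon
      push_neg at hcon
      obtain ⟨hf, hg⟩ := hcon
      have hdf := hdense f hf
      have hdg := hdense g hg
      obtain ⟨a, haJ, hda⟩ := Metric.mem_closure_iff.mp (hdf 1) (1/2) (by norm_num)
      obtain ⟨b, hbJ, hdb⟩ := Metric.mem_closure_iff.mp (hdg 1) (1/2) (by norm_num)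
      rw [dist_eq_norm] at hda hdb
      obtain ⟨u, hu, z, hz, hab⟩ := Submodule.mem_sup.mp haJ
      obtain ⟨c, hc⟩ := Ideal.mem_span_singleton'.mp hz
      obtain ⟨v, hv, w, hw, hba⟩ := Submodule.mem_sup.mp hbJ
      obtain ⟨d, hd⟩ := Ideal.mem_span_singleton'.mp hw
      have habm : a * b ∈ m := by
        rw [← hab, ← hba, ← hc, ← hd]
        have hexp : (u + c * f) * (v + d * g) = u * (v + d * g) + (c * v) * f + (c * d) * (f * g) := by
          ring
        rw [hexp]
        exact m.add_mem (m.add_mem (m.mul_mem_right _ hu) (m.mul_mem_right f (m.mul_mem_left c hv)))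
          (m.mul_mem_left _ hfg)
      have hanorm : ‖a‖ ≤ 1 := by
        have h1 : a = 1 + -(1 - a) := by ring
        have := hA 1 (-(1 - a))
        rw [← h1] at this
        simp only [norm_neg, norm_one] at this
        exact this.trans (max_le le_rfl (by linarith))
      have hnab : ‖1 - a * b‖ < 1 := by
        have h1 : 1 - a * b = (1 - a) + a * (1 - b) := by ring
        rw [h1]
        refine (hA _ _).trans_lt ?_
        have h2 : ‖a * (1 - b)‖ ≤ ‖a‖ * ‖1 - b‖ := norm_mul_le _ _
        have h3 : ‖a‖ * ‖1 - b‖ ≤ 1 * (1/2) := by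
          apply mul_le_mul hanorm hdb.le (norm_nonneg _) zero_le_one
        apply max_lt <;> linarith
      exact hmnd (aux_dense m habm hnab)
  -- the spectral seminorm
  have hstruct : IsBddPowMulSeminorm (phi m) :=
    { nonneg := phi_nonneg m
      map_zero := phi_zero m
      map_one := phi_one m hmnd
      map_neg := phi_neg m
      nonarch := phi_nonarch hA m hmnd
      submul := phi_submul m hmnd
      pow_mul := fun f n hn => phi_pow m hmnd f n hn
      bounded := ⟨1, one_pos, fun f => by simpa using phi_le_norm m f⟩ }
  have hker : ∀ f : A, f ∈ m ↔ phi m f = 0 := by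
    intro f
    constructor
    · exact fun hf => phi_mem m hf
    · intro hphi0
      by_contra hfm
      obtain ⟨a, haJ, hda⟩ := Metric.mem_closure_iff.mp (hdense f hfm 1) 1 one_pos
      rw [dist_eq_norm] at hda
      obtain ⟨u, hu, z, hz, hab⟩ := Submodule.mem_sup.mp haJ
      obtain ⟨c, hc⟩ := Ideal.mem_span_singleton'.mp hz
      have hphia : phi m a ≤ 0 := by
        rw [← hab, ← hc]
        refine (phi_nonarch hA m hmnd u (c * f)).trans (max_le ?_ ?_)
        · rw [phi_mem m hu]
        · refine (phi_submul m hmnd c f).trans ?_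
          rw [hphi0, mul_zero]
      have h1 : (1:ℝ) = phi m 1 := (phi_one m hmnd).symm
      have h2 : phi m ((1 - a) + a) ≤ max (phi m (1 - a)) (phi m a) :=
        phi_nonarch hA m hmnd _ _
      rw [sub_add_cancel] at h2
      have h3 : phi m (1 - a) < 1 := lt_of_le_of_lt (phi_le_norm m _) hda
      have : (1:ℝ) < 1 := by
        calc (1:ℝ) = phi m 1 := h1
        _ ≤ max (phi m (1 - a)) (phi m a) := h2
        _ < 1 := max_lt h3 (lt_of_le_of_lt hphia one_pos)
      exact absurd this (lt_irrefl 1)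
  have hsr : IsSpectrallyReduced m := ⟨phi m, hstruct, hker⟩
  exact ⟨⟨m, hprime, hsr, hIm⟩, ⟨⟨⟨m, hprime⟩, hsr⟩⟩⟩
end

section
/- Let K be a nonarchimedean field and A a normed K-algebra. For x ∈ A set τ(x) := sup{ |λ| : λ ∈ K and x − λ·1 is not invertible in A } ∪ {0} (a supremum in [0,∞]). The following are equivalent: (1) A is Zariskian (every element of 1 + A°° is a unit, A°° the topologically nilpotent elements); (2) every element of the topological boundary of A^× is a topological divisor of zero; (3) τ(x) ≤ |x|_spc for all x ∈ A; (4) τ(x) ≤ ‖x‖ for all x ∈ A; (5) there exists c > 0 such that τ(x) ≤ c‖x‖ for all x ∈ A; (6) whenever ‖x‖ < 1 there exists n ≥ 1 with 1 − x^n ∈ A^×; (7) whenever the series ∑_{n≥0} ‖x‖^n converges in ℝ, the series ∑_{n≥0} x^n converges in A. -/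
open Filter Topology

/-- The spectral seminorm `|x|_spc = inf_{n ≥ 1} ‖x^n‖^{1/n}` of a seminormed ring. -/
noncomputable def spcSeminorm {A : Type*} [SeminormedRing A] (x : A) : ℝ :=
  ⨅ n : ℕ, ‖x ^ (n + 1)‖ ^ (((n : ℝ) + 1)⁻¹)

/-- `τ(x)`: the supremum in `[0,∞]` of the absolute values of the scalars `λ` such that
`x - λ·1` is not invertible, together with `0`. -/
noncomputable def tauSpec (K : Type*) {A : Type*} [NontriviallyNormedField K]
    [NormedCommRing A] [NormedAlgebra K A] (x : A) : ENNReal :=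
  sSup (insert 0
    {r : ENNReal | ∃ lam : K, ¬ IsUnit (x - algebraMap K A lam) ∧ r = ENNReal.ofReal ‖lam‖})

/-- An element `x` is a topological divisor of zero if there is a sequence whose norms are
bounded away from `0` and whose products with `x` tend to `0`. -/
def IsTopDivZero {A : Type*} [SeminormedRing A] (x : A) : Prop :=
  ∃ u : ℕ → A, (∃ δ > 0, ∀ n, δ ≤ ‖u n‖) ∧ Tendsto (fun n => u n * x) atTop (nhds 0)

section aux
set_option linter.unusedSectionVars false
variable {A : Type*} [NormedCommRing A] [NormOneClass A]

lemma aux_unit_ne_zero (u : Aˣ) : (↑u : A) ≠ 0 := by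
  have : Nontrivial A := ⟨1, 0, by intro h; simpa [h] using (norm_one : ‖(1:A)‖ = 1)⟩
  exact Units.ne_zero u

lemma aux_norm_inv_pos (u : Aˣ) : 0 < ‖(↑u⁻¹ : A)‖ :=
  norm_pos_iff.mpr (aux_unit_ne_zero u⁻¹)

lemma aux_isUnit_of_close
    (h1 : ∀ x : A, Tendsto (fun n : ℕ => x ^ n) atTop (nhds 0) → IsUnit (1 + x))
    (u : Aˣ) (v : A) (hv : ‖(↑u⁻¹ : A) * (v - ↑u)‖ < 1) : IsUnit v := by
  have h := h1 _ (tendsto_pow_atTop_nhds_zero_of_norm_lt_one hv)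
  have huu : (↑u : A) * ↑u⁻¹ = 1 := u.mul_inv
  have hveq : v = ↑u * (1 + ↑u⁻¹ * (v - ↑u)) := by linear_combination (↑u - v) * huu
  rw [hveq]; exact u.isUnit.mul h

lemma aux_units_mem_nhds
    (h1 : ∀ x : A, Tendsto (fun n : ℕ => x ^ n) atTop (nhds 0) → IsUnit (1 + x))
    (u : Aˣ) : {y : A | IsUnit y} ∈ 𝓝 (↑u : A) := by
  rw [Metric.mem_nhds_iff]
  refine ⟨(‖(↑u⁻¹ : A)‖)⁻¹, inv_pos.mpr (aux_norm_inv_pos u), fun v hv => ?_⟩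
  have hd : ‖v - ↑u‖ < (‖(↑u⁻¹ : A)‖)⁻¹ := by
    simpa [dist_eq_norm] using hv
  refine aux_isUnit_of_close h1 u v (lt_of_le_of_lt (norm_mul_le _ _) ?_)
  calc ‖(↑u⁻¹ : A)‖ * ‖v - ↑u‖ < ‖(↑u⁻¹ : A)‖ * (‖(↑u⁻¹ : A)‖)⁻¹ :=
        mul_lt_mul_of_pos_left hd (aux_norm_inv_pos u)
    _ = 1 := mul_inv_cancel₀ (aux_norm_inv_pos u).ne'

lemma aux_tendsto_pow_zero (y : A) (N : ℕ) (hN : 0 < N) (h : ‖y ^ N‖ < 1) :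
    Tendsto (fun m : ℕ => y ^ m) atTop (nhds 0) := by
  set θ := ‖y ^ N‖ with hθ
  set C := ∑ r ∈ Finset.range N, ‖y ^ r‖ with hC
  have hCnn : 0 ≤ C := Finset.sum_nonneg fun _ _ => norm_nonneg _
  have hbound : ∀ m : ℕ, ‖y ^ m‖ ≤ θ ^ (m / N) * C := by
    intro m
    have hm : y ^ m = (y ^ N) ^ (m / N) * y ^ (m % N) := by
      rw [← pow_mul, ← pow_add, Nat.div_add_mod]
    rw [hm]
    refine le_trans (norm_mul_le _ _) (mul_le_mul ?_ ?_ (norm_nonneg _) (by positivity))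
    · exact norm_pow_le _ _
    · exact Finset.single_le_sum (f := fun r => ‖y ^ r‖) (fun _ _ => norm_nonneg _)
        (Finset.mem_range.mpr (Nat.mod_lt _ hN))
  have hdiv : Tendsto (fun m : ℕ => m / N) atTop atTop := by
    rw [tendsto_atTop_atTop]
    intro b
    exact ⟨b * N, fun a ha => (Nat.le_div_iff_mul_le hN).mpr ha⟩
  have hθ0 : Tendsto (fun m : ℕ => θ ^ (m / N) * C) atTop (nhds 0) := by
    have := ((tendsto_pow_atTop_nhds_zero_of_lt_one (norm_nonneg _) h).comp hdiv).mul_const C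
    simpa using this
  exact squeeze_zero_norm hbound hθ0

lemma aux_isUnit_add_one_of_pow (x : A) (m : ℕ) (h : IsUnit (1 - x ^ (2 * m))) :
    IsUnit (1 + x) := by
  have h' : IsUnit (x ^ (2 * m) - 1) := by simpa [neg_sub] using h.neg
  have hf : x ^ (2 * m) - 1 = ((∑ i ∈ Finset.range m, (x ^ 2) ^ i) * (x - 1)) * (x + 1) := by
    rw [pow_mul, ← geom_sum_mul]; ring
  rw [hf] at h'
  simpa [add_comm] using isUnit_of_mul_isUnit_right h'

end aux

/-- Characterisations of Zariskian normed algebras over a nonarchimedean field. -/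
theorem zariskian_normed_algebra_tfae {K A : Type*}
    [NontriviallyNormedField K] [CompleteSpace K]
    (hK : IsNonarchimedean (fun x : K => ‖x‖))
    [NormedCommRing A] [NormOneClass A] [NormedAlgebra K A]
    (hA : IsNonarchimedean (fun a : A => ‖a‖)) :
    List.TFAE [
      ∀ x : A, Tendsto (fun n : ℕ => x ^ n) atTop (nhds 0) → IsUnit (1 + x),
      ∀ x ∈ frontier {y : A | IsUnit y}, IsTopDivZero x,
      ∀ x : A, tauSpec K x ≤ ENNReal.ofReal (spcSeminorm x),
      ∀ x : A, tauSpec K x ≤ ENNReal.ofReal ‖x‖,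
      ∃ c : ℝ, 0 < c ∧ ∀ x : A, tauSpec K x ≤ ENNReal.ofReal (c * ‖x‖),
      ∀ x : A, ‖x‖ < 1 → ∃ n : ℕ, 1 ≤ n ∧ IsUnit (1 - x ^ n),
      ∀ x : A, (∃ L : ℝ, Tendsto (fun N : ℕ => ∑ n ∈ Finset.range N, ‖x‖ ^ n) atTop (nhds L)) →
        ∃ y : A, Tendsto (fun N : ℕ => ∑ n ∈ Finset.range N, x ^ n) atTop (nhds y)
    ] := by
  tfae_have 1 → 3 := by
    intro h1 x
    refine sSup_le ?_
    rintro r hr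
    rcases Set.mem_insert_iff.mp hr with rfl | ⟨lam, hnu, rfl⟩
    · exact zero_le
    refine ENNReal.ofReal_le_ofReal ?_
    by_contra hlt
    push_neg at hlt
    have hspc0 : 0 ≤ spcSeminorm x := le_ciInf fun n => by positivity
    have hlam0 : 0 < ‖lam‖ := lt_of_le_of_lt hspc0 hlt
    have hlamne : lam ≠ 0 := norm_pos_iff.mp hlam0
    obtain ⟨n, hn⟩ := exists_lt_of_ciInf_lt hlt
    set N := n + 1 with hNdef
    have hNR : ((n : ℝ) + 1) = (N : ℝ) := by push_cast [hNdef]; ring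
    have hxN : ‖x ^ N‖ < ‖lam‖ ^ N := by
      have hkey : (‖x ^ N‖ ^ (((N : ℝ))⁻¹)) ^ N = ‖x ^ N‖ := by
        rw [← Real.rpow_natCast (‖x ^ N‖ ^ (((N : ℝ))⁻¹)) N, ← Real.rpow_mul (norm_nonneg _),
          inv_mul_cancel₀ (Nat.cast_ne_zero.mpr (Nat.succ_ne_zero n)), Real.rpow_one]
      have := pow_lt_pow_left₀ (hNR ▸ hn) (by positivity) (Nat.succ_ne_zero n)
      rwa [hkey] at this
    set y := lam⁻¹ • x with hy
    have hyN : ‖y ^ N‖ < 1 := by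
      rw [hy, smul_pow, norm_smul, norm_pow, norm_inv]
      rw [inv_pow, inv_mul_lt_iff₀ (by positivity), mul_one]
      exact hxN
    have hpow := aux_tendsto_pow_zero y N (Nat.succ_pos n) hyN
    have hnormeq : ∀ m : ℕ, ‖(-y) ^ m‖ = ‖y ^ m‖ := fun m => by
      rcases Nat.even_or_odd m with hm | hm
      · rw [hm.neg_pow]
      · rw [hm.neg_pow, norm_neg]
    have hneg : Tendsto (fun m : ℕ => (-y) ^ m) atTop (nhds 0) :=
      squeeze_zero_norm (fun m => le_of_eq (hnormeq m)) (by simpa using hpow.norm)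
    have hu : IsUnit (1 - y) := by
      have := h1 (-y) hneg
      rwa [← sub_eq_add_neg] at this
    apply hnu
    have hxeq : x - algebraMap K A lam = algebraMap K A lam * (y - 1) := by
      have hxy : lam • y = x := by rw [hy, smul_inv_smul₀ hlamne]
      calc x - algebraMap K A lam = lam • y - lam • (1 : A) := by
            rw [hxy, Algebra.algebraMap_eq_smul_one]
        _ = lam • (y - 1) := (smul_sub _ _ _).symm
        _ = algebraMap K A lam * (y - 1) := by rw [Algebra.smul_def]
    rw [hxeq]
    refine (IsUnit.map (algebraMap K A) (isUnit_iff_ne_zero.mpr hlamne)).mul ?_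
    simpa [neg_sub] using hu.neg
  tfae_have 3 → 4 := by
    intro h x
    refine le_trans (h x) (ENNReal.ofReal_le_ofReal ?_)
    have hb : BddBelow (Set.range fun n : ℕ => ‖x ^ (n + 1)‖ ^ (((n : ℝ) + 1)⁻¹)) :=
      ⟨0, by rintro r ⟨n, rfl⟩; positivity⟩
    have := ciInf_le hb 0
    simp at this; exact this
  tfae_have 4 → 5 := by
    intro h
    exact ⟨1, one_pos, fun x => by simpa using h x⟩
  tfae_have 5 → 1 := by
    rintro ⟨c, hc, h5⟩ x hx
    by_contra hnu
    have hall : ∀ m : ℕ, ¬ IsUnit (x ^ (2 * m) - 1) := by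
      intro m hm
      exact hnu (aux_isUnit_add_one_of_pow x m (by simpa [neg_sub] using hm.neg))
    have h2m : Tendsto (fun m : ℕ => c * ‖x ^ (2 * m)‖) atTop (nhds 0) := by
      have hsub : Tendsto (fun m : ℕ => x ^ (2 * m)) atTop (nhds 0) :=
        hx.comp (tendsto_atTop_atTop.mpr fun b => ⟨b, fun a ha => by omega⟩)
      have := (hsub.norm).const_mul c
      simpa using this
    obtain ⟨m, hm⟩ := (h2m.eventually_lt_const one_pos).exists
    have hone : (1 : ENNReal) ≤ tauSpec K (x ^ (2 * m)) := by
      have hmem : ENNReal.ofReal ‖(1 : K)‖ ∈ insert 0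
          {r : ENNReal | ∃ lam : K,
            ¬ IsUnit (x ^ (2 * m) - algebraMap K A lam) ∧ r = ENNReal.ofReal ‖lam‖} :=
        Set.mem_insert_iff.mpr (Or.inr ⟨1, by simpa using hall m, rfl⟩)
      have := le_sSup hmem
      simpa [tauSpec] using this
    have := lt_of_le_of_lt (le_trans hone (h5 (x ^ (2 * m)))) (ENNReal.ofReal_lt_one.mpr hm)
    exact lt_irrefl _ this
  tfae_have 1 → 6 := by
    intro h1 x hx
    refine ⟨1, le_refl 1, ?_⟩
    rw [pow_one]
    have := h1 (-x) (tendsto_pow_atTop_nhds_zero_of_norm_lt_one (by rwa [norm_neg]))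
    rwa [← sub_eq_add_neg] at this
  tfae_have 6 → 1 := by
    intro h6 x hx
    have hn : ∀ᶠ m : ℕ in atTop, ‖x ^ m‖ < 1 :=
      (by simpa using hx.norm : Tendsto (fun m : ℕ => ‖x ^ m‖) atTop (nhds 0)).eventually_lt_const
        one_pos
    obtain ⟨m, hm1, hm⟩ := ((eventually_ge_atTop 1).and hn).exists
    have h2m : ‖x ^ (2 * m)‖ < 1 := by
      have he : x ^ (2 * m) = x ^ m * x ^ m := by rw [two_mul, pow_add]
      rw [he]
      calc ‖x ^ m * x ^ m‖ ≤ ‖x ^ m‖ * ‖x ^ m‖ := norm_mul_le _ _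
        _ < 1 := by nlinarith [norm_nonneg (x ^ m)]
    obtain ⟨n, hn1, hu⟩ := h6 (x ^ (2 * m)) h2m
    rw [← pow_mul, mul_assoc] at hu
    exact aux_isUnit_add_one_of_pow x (m * n) hu
  tfae_have 1 → 7 := by
    rintro h1 x ⟨L, hL⟩
    have hterm : Tendsto (fun N : ℕ => ‖x‖ ^ N) atTop (nhds 0) := by
      have h₁ := hL.comp (tendsto_add_atTop_nat 1)
      have := h₁.sub hL
      simpa [Finset.sum_range_succ] using this
    have hxlt : ‖x‖ < 1 := by
      by_contra hge
      push_neg at hge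
      obtain ⟨N, hN⟩ := (hterm.eventually_lt_const one_pos).exists
      exact absurd hN (not_lt.mpr (one_le_pow₀ hge))
    have hxp : Tendsto (fun N : ℕ => x ^ N) atTop (nhds 0) :=
      tendsto_pow_atTop_nhds_zero_of_norm_lt_one hxlt
    have hu : IsUnit (1 - x) := by
      have := h1 (-x) (tendsto_pow_atTop_nhds_zero_of_norm_lt_one (by rwa [norm_neg]))
      rwa [← sub_eq_add_neg] at this
    obtain ⟨U, hU⟩ := hu
    refine ⟨↑U⁻¹, ?_⟩
    have hps : ∀ N : ℕ, (∑ n ∈ Finset.range N, x ^ n) = (1 - x ^ N) * ↑U⁻¹ := by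
      intro N
      have hg : (∑ n ∈ Finset.range N, x ^ n) * (1 - x) = 1 - x ^ N := by
        linear_combination (-1 : A) * geom_sum_mul x N
      have hui : (1 - x) * (↑U⁻¹ : A) = 1 := by rw [← hU]; exact U.mul_inv
      calc (∑ n ∈ Finset.range N, x ^ n)
          = (∑ n ∈ Finset.range N, x ^ n) * ((1 - x) * ↑U⁻¹) := by rw [hui, mul_one]
        _ = ((∑ n ∈ Finset.range N, x ^ n) * (1 - x)) * ↑U⁻¹ := by ring
        _ = (1 - x ^ N) * ↑U⁻¹ := by rw [hg]
    have hlim : Tendsto (fun N : ℕ => ((1 : A) - x ^ N) * ↑U⁻¹) atTop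
        (nhds (((1 : A) - 0) * ↑U⁻¹)) := (tendsto_const_nhds.sub hxp).mul_const _
    rw [sub_zero, one_mul] at hlim
    exact hlim.congr fun N => (hps N).symm
  tfae_have 7 → 6 := by
    intro h7 x hx
    obtain ⟨y, hy⟩ := h7 x ⟨(1 - ‖x‖)⁻¹,
      (hasSum_geometric_of_lt_one (norm_nonneg x) hx).tendsto_sum_nat⟩
    refine ⟨1, le_refl 1, ?_⟩
    rw [pow_one]
    have hg : Tendsto (fun N : ℕ => (∑ n ∈ Finset.range N, x ^ n) * (1 - x)) atTop
        (nhds (y * (1 - x))) := hy.mul_const _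
    have hxp := tendsto_pow_atTop_nhds_zero_of_norm_lt_one hx
    have hg' : Tendsto (fun N : ℕ => (∑ n ∈ Finset.range N, x ^ n) * (1 - x)) atTop (nhds 1) := by
      have h2 : Tendsto (fun N : ℕ => (1 : A) - x ^ N) atTop (nhds ((1 : A) - 0)) :=
        tendsto_const_nhds.sub hxp
      rw [sub_zero] at h2
      exact (h2 : Tendsto (fun N : ℕ => (1:A) - x ^ N) atTop (nhds 1)).congr fun N => by
        linear_combination geom_sum_mul x N
    have hyx : y * (1 - x) = 1 := tendsto_nhds_unique hg hg'
    exact IsUnit.of_mul_eq_one (a := 1 - x) y (by rw [mul_comm]; exact hyx)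
  tfae_have 1 → 2 := by
    intro h1 y hy
    have hycl : y ∈ closure {y : A | IsUnit y} := frontier_subset_closure hy
    have hynot : ¬ IsUnit y := by
      rintro ⟨w, rfl⟩
      exact hy.2 (mem_interior_iff_mem_nhds.mpr (aux_units_mem_nhds h1 w))
    obtain ⟨u, hu_units, hu_tendsto⟩ := mem_closure_iff_seq_limit.mp hycl
    choose v hv using hu_units
    have key : ∀ n : ℕ, 1 ≤ ‖(↑(v n)⁻¹ : A) * (y - u n)‖ := by
      intro n
      by_contra hlt
      push_neg at hlt
      exact hynot (aux_isUnit_of_close h1 (v n) y (by rw [hv n]; exact hlt))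
    obtain ⟨ρ, hρ⟩ := NormedField.exists_one_lt_norm K
    have ρpos : (0 : ℝ) < ‖ρ‖ := lt_trans one_pos hρ
    have hex : ∀ n : ℕ, ∃ lam : K,
        ‖lam‖ * ‖(↑(v n)⁻¹ : A)‖ ∈ Set.Ico (‖ρ‖⁻¹) 1 := by
      intro n
      obtain ⟨k, hk⟩ := exists_mem_Ico_zpow (aux_norm_inv_pos (v n)) hρ
      refine ⟨ρ ^ (-(k + 1)), ?_⟩
      rw [norm_zpow, zpow_neg]
      have hPpos : (0 : ℝ) < ‖ρ‖ ^ (k + 1) := zpow_pos ρpos _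
      rw [inv_mul_eq_div]
      constructor
      · rw [le_div_iff₀ hPpos]
        calc ‖ρ‖⁻¹ * ‖ρ‖ ^ (k + 1) = ‖ρ‖ ^ k := by
              rw [← zpow_neg_one, ← zpow_add₀ ρpos.ne']; norm_num
          _ ≤ ‖(↑(v n)⁻¹ : A)‖ := hk.1
      · rw [div_lt_one hPpos]
        exact hk.2
    choose lam hlam using hex
    refine ⟨fun n => lam n • (↑(v n)⁻¹ : A), ⟨‖ρ‖⁻¹, inv_pos.mpr ρpos, fun n => ?_⟩, ?_⟩
    · rw [norm_smul]; exact (hlam n).1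
    · refine squeeze_zero_norm (a := fun n => ‖y - u n‖) (fun n => ?_) ?_
      · show ‖(lam n • (↑(v n)⁻¹ : A)) * y‖ ≤ ‖y - u n‖
        have hinner : (↑(v n)⁻¹ : A) * y = 1 + ↑(v n)⁻¹ * (y - u n) := by
          rw [← hv n]
          linear_combination (v n).inv_mul
        rw [smul_mul_assoc, hinner, norm_smul]
        have hz := key n
        have hmax : ‖(1 : A) + ↑(v n)⁻¹ * (y - u n)‖ ≤ ‖(↑(v n)⁻¹ : A)‖ * ‖y - u n‖ := by
          calc ‖(1 : A) + ↑(v n)⁻¹ * (y - u n)‖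
              ≤ max ‖(1 : A)‖ ‖(↑(v n)⁻¹ : A) * (y - u n)‖ := hA 1 _
            _ = ‖(↑(v n)⁻¹ : A) * (y - u n)‖ := max_eq_right (by rw [norm_one]; exact hz)
            _ ≤ ‖(↑(v n)⁻¹ : A)‖ * ‖y - u n‖ := norm_mul_le _ _
        calc ‖lam n‖ * ‖(1 : A) + ↑(v n)⁻¹ * (y - u n)‖
            ≤ ‖lam n‖ * (‖(↑(v n)⁻¹ : A)‖ * ‖y - u n‖) :=
              mul_le_mul_of_nonneg_left hmax (norm_nonneg _)
          _ = (‖lam n‖ * ‖(↑(v n)⁻¹ : A)‖) * ‖y - u n‖ := by ring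
          _ ≤ 1 * ‖y - u n‖ :=
              mul_le_mul_of_nonneg_right (le_of_lt (hlam n).2) (norm_nonneg _)
          _ = ‖y - u n‖ := one_mul _
      · have hys : Tendsto (fun n : ℕ => y - u n) atTop (nhds (y - y)) :=
          tendsto_const_nhds.sub hu_tendsto
        rw [sub_self] at hys
        simpa using hys.norm
  tfae_have 2 → 6 := by
    intro h2 x hx
    by_contra hc
    push_neg at hc
    have h1f : (1 : A) ∈ frontier {y : A | IsUnit y} := by
      constructor
      · exact subset_closure isUnit_one
      · intro hint
        have hnb := mem_interior_iff_mem_nhds.mp hint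
        have htd : Tendsto (fun n : ℕ => (1 : A) - x ^ n) atTop (nhds 1) := by
          have := tendsto_pow_atTop_nhds_zero_of_norm_lt_one hx
          simpa using (tendsto_const_nhds.sub this)
        have hev := htd.eventually (eventually_of_mem hnb fun z hz => hz)
        obtain ⟨n, hn1, hnu⟩ := ((eventually_ge_atTop 1).and hev).exists
        exact hc n hn1 hnu
    obtain ⟨w, ⟨δ, hδ, hwl⟩, hw0⟩ := h2 1 h1f
    have hnorm : Tendsto (fun n : ℕ => ‖w n * 1‖) atTop (nhds 0) := by simpa using hw0.norm
    obtain ⟨n, hn⟩ := (hnorm.eventually_lt_const hδ).exists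
    rw [mul_one] at hn
    exact absurd (hwl n) (not_le.mpr hn)
  tfae_finish
end

section
/- Let K be a nonarchimedean field. Let B be a normed K-algebra whose spectral seminorm satisfies |x|_spc^B = τ_B(x) for all x ∈ B, where τ_B(x) := sup{ |λ| : λ ∈ K and x − λ·1 is not invertible in B } ∪ {0}. Let A be a Zariskian normed K-algebra with spectral seminorm |·|_spc^A. Then every K-algebra homomorphism φ : A → B satisfies |φ(x)|_spc^B ≤ |x|_spc^A for all x ∈ A. -/
open Filter Topology

lemma spcSeminorm_nonneg {A : Type*} [SeminormedRing A] (x : A) : 0 ≤ spcSeminorm x :=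
  Real.iInf_nonneg fun n => Real.rpow_nonneg (norm_nonneg _) _

lemma isUnit_sub_of_spc_lt {K A : Type*}
    [NontriviallyNormedField K] [NormedCommRing A] [NormOneClass A] [NormedAlgebra K A]
    (hAzar : ∀ x : A, Tendsto (fun n : ℕ => x ^ n) atTop (nhds 0) → IsUnit (1 + x))
    (x : A) (lam : K) (h : spcSeminorm x < ‖lam‖) :
    IsUnit (x - algebraMap K A lam) := by
  have hlampos : 0 < ‖lam‖ := lt_of_le_of_lt (spcSeminorm_nonneg x) h
  have hlam0 : lam ≠ 0 := by
    intro h0; rw [h0, norm_zero] at hlampos; exact lt_irrefl _ hlampos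
  obtain ⟨n, hn⟩ := exists_lt_of_ciInf_lt h
  set y : A := lam⁻¹ • x with hy_def
  set m : ℕ := n + 1 with hm
  have hp : (0:ℝ) < (n : ℝ) + 1 := by positivity
  -- ‖x ^ m‖ < ‖lam‖ ^ m
  have hxm : ‖x ^ m‖ < ‖lam‖ ^ m := by
    have h1 : (‖x ^ m‖ ^ (((n : ℝ) + 1)⁻¹)) ^ ((n : ℝ) + 1) < ‖lam‖ ^ ((n : ℝ) + 1) :=
      Real.rpow_lt_rpow (Real.rpow_nonneg (norm_nonneg _) _) hn hp
    rw [Real.rpow_inv_rpow (norm_nonneg _) (ne_of_gt hp)] at h1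
    have h2 : ((n : ℝ) + 1) = ((m : ℕ) : ℝ) := by push_cast [hm]; ring
    rw [h2, Real.rpow_natCast] at h1
    exact h1
  have hym : ‖y ^ m‖ < 1 := by
    have : y ^ m = (lam⁻¹) ^ m • x ^ m := by rw [hy_def, smul_pow]
    rw [this, norm_smul, norm_pow, norm_inv, inv_pow]
    rw [inv_mul_lt_iff₀ (by positivity), mul_one]
    exact hxm
  -- 1 - y ^ m is a unit
  have hunit_m : IsUnit (1 - y ^ m) := by
    have htend : Tendsto (fun k : ℕ => (-(y ^ m)) ^ k) atTop (nhds 0) := by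
      apply tendsto_pow_atTop_nhds_zero_of_norm_lt_one
      rwa [norm_neg]
    have := hAzar (-(y ^ m)) htend
    rwa [← sub_eq_add_neg] at this
  -- factor through the geometric sum
  have hfac : (∑ i ∈ Finset.range m, y ^ i) * (1 - y) = 1 - y ^ m := by
    have := geom_sum_mul y m
    calc (∑ i ∈ Finset.range m, y ^ i) * (1 - y)
        = -((∑ i ∈ Finset.range m, y ^ i) * (y - 1)) := by ring
      _ = -(y ^ m - 1) := by rw [this]
      _ = 1 - y ^ m := by ring
  have hunit_y : IsUnit (1 - y) := by
    rw [← hfac] at hunit_m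
    exact isUnit_of_mul_isUnit_right hunit_m
  -- x - lam = (-lam) • (1 - y)
  have hrw : x - algebraMap K A lam = algebraMap K A (-lam) * (1 - y) := by
    rw [← Algebra.smul_def, hy_def, smul_sub, smul_smul]
    simp only [neg_mul, mul_inv_cancel₀ hlam0, neg_smul, one_smul]
    rw [← Algebra.algebraMap_eq_smul_one]
    ring
  rw [hrw]
  exact ((isUnit_iff_ne_zero.mpr (neg_ne_zero.mpr hlam0)).map (algebraMap K A)).mul hunit_y

/-- If the spectral seminorm of a normed `K`-algebra `B` coincides with `τ_B`, then every
`K`-algebra homomorphism from a Zariskian normed `K`-algebra `A` to `B` contracts spectral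
seminorms. -/
theorem spectral_seminorm_automatic_continuity {K A B : Type*}
    [NontriviallyNormedField K] [CompleteSpace K]
    (hK : IsNonarchimedean (fun x : K => ‖x‖))
    [NormedCommRing A] [NormOneClass A] [NormedAlgebra K A]
    (hA : IsNonarchimedean (fun a : A => ‖a‖))
    [NormedCommRing B] [NormOneClass B] [NormedAlgebra K B]
    (hB : IsNonarchimedean (fun b : B => ‖b‖))
    (hBspec : ∀ x : B, ENNReal.ofReal (spcSeminorm x) = tauSpec K x)
    (hAzar : ∀ x : A, Tendsto (fun n : ℕ => x ^ n) atTop (nhds 0) → IsUnit (1 + x))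
    (φ : A →ₐ[K] B) :
    ∀ x : A, spcSeminorm (φ x) ≤ spcSeminorm x := by
  intro x
  rw [← ENNReal.ofReal_le_ofReal_iff (spcSeminorm_nonneg x), hBspec (φ x)]
  apply sSup_le
  rintro r (rfl | ⟨lam, hunit, rfl⟩)
  · exact zero_le
  · apply ENNReal.ofReal_le_ofReal
    by_contra hlt
    push_neg at hlt
    apply hunit
    have : φ x - algebraMap K B lam = φ (x - algebraMap K A lam) := by
      rw [map_sub, AlgHom.commutes]
    rw [this]
    exact (isUnit_sub_of_spc_lt hAzar x lam hlt).map φ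
end
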